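/- arXiv:1602.05478 — 3 statements merged into one kernel-verified Lean document; each statement's English description precedes it below -/
import Mathlib

section
/- Let Q be a lower transition rate operator on a finite nonempty set 𝒳, and let (T_t)_{t≥0} be the associated family of operators determined by the differential equation d/dt T_t f = Q(T_t f) with T_0 f = f. Then for any t > 0, Q is ergodic if and only if the lower transition operator T_t is regularly absorbing. -/
open Filter Topology

/-- The minimum of a real-valued function on a finite nonempty type. -/
noncomputable def minf {X : Type*} [Fintype X] [Nonempty X] (f : X → ℝ) : ℝ :=
  Finset.univ.inf' Finset.univ_nonempty f

/-- The maximum of a real-valued function on a finite nonempty type. -/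
noncomputable def maxf {X : Type*} [Fintype X] [Nonempty X] (f : X → ℝ) : ℝ :=
  Finset.univ.sup' Finset.univ_nonempty f

/-- The (real-valued) indicator function of a set. -/
noncomputable def ind {X : Type*} (A : Set X) : X → ℝ := A.indicator 1

/-- The conjugate (upper) operator `f ↦ -(Q (-f))`. -/
def conjOp {X : Type*} (Q : (X → ℝ) → (X → ℝ)) : (X → ℝ) → (X → ℝ) :=
  fun f => -(Q (-f))

/-- A lower transition rate operator. -/
def IsLTRO {X : Type*} [Fintype X] (Q : (X → ℝ) → (X → ℝ)) : Prop :=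
  (∀ μ : ℝ, Q (fun _ => μ) = 0) ∧
  (∀ f g : X → ℝ, Q f + Q g ≤ Q (f + g)) ∧
  (∀ l : ℝ, 0 ≤ l → ∀ f : X → ℝ, Q (l • f) = l • Q f) ∧
  (∀ x y : X, x ≠ y → 0 ≤ Q (ind {y}) x)

/-- A lower transition operator. -/
def IsLTO {X : Type*} [Fintype X] [Nonempty X] (T : (X → ℝ) → (X → ℝ)) : Prop :=
  (∀ f : X → ℝ, ∀ x : X, minf f ≤ T f x) ∧
  (∀ f g : X → ℝ, T f + T g ≤ T (f + g)) ∧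
  (∀ l : ℝ, 0 ≤ l → ∀ f : X → ℝ, T (l • f) = l • T f)

/-- `T` is the family of operators solving `d/dt T_t f = Q (T_t f)` on `[0,∞)`
with `T_0 f = f`. -/
def IsSol {X : Type*} [Fintype X] (Q : (X → ℝ) → (X → ℝ))
    (T : ℝ → (X → ℝ) → (X → ℝ)) : Prop :=
  (∀ f : X → ℝ, T 0 f = f) ∧
  (∀ f : X → ℝ, ∀ t : ℝ, 0 ≤ t →
    HasDerivWithinAt (fun s => T s f) (Q (T t f)) (Set.Ici 0) t)

/-- Ergodicity of a lower transition rate operator, expressed via its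
associated time-dependent family `T`. -/
def ErgodicQ {X : Type*} [Fintype X] (T : ℝ → (X → ℝ) → (X → ℝ)) : Prop :=
  ∀ f : X → ℝ, ∃ c : ℝ, Tendsto (fun t => T t f) atTop (𝓝 (fun _ : X => c))

/-- Ergodicity of a lower transition operator. -/
def ErgodicT {X : Type*} [Fintype X] (T : (X → ℝ) → (X → ℝ)) : Prop :=
  ∀ f : X → ℝ, ∃ c : ℝ, Tendsto (fun n : ℕ => T^[n] f) atTop (𝓝 (fun _ : X => c))

/-- `x` is upper reachable from `y` (w.r.t. the lower transition rate operator `Q`). -/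
def upperReach {X : Type*} [Fintype X] (Q : (X → ℝ) → (X → ℝ)) (y x : X) : Prop :=
  ∃ (n : ℕ) (p : ℕ → X), p 0 = y ∧ p n = x ∧
    ∀ k : ℕ, k < n → p (k + 1) ≠ p k ∧ 0 < conjOp Q (ind {p (k + 1)}) (p k)

/-- One step of the lower-reachability construction: `A ↦ A ∪ {y ∉ A : Q(𝟙_A)(y) > 0}`. -/
def lowerStep {X : Type*} [Fintype X] (Q : (X → ℝ) → (X → ℝ)) (A : Set X) : Set X :=
  A ∪ {y : X | y ∉ A ∧ 0 < Q (ind A) y}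

/-- `A` is lower reachable from `x`: `x ∈ Aₙ` where `n` is the first index with
`Aₙ = Aₙ₊₁` (equivalently, any such index, since the sequence is determined by
recursion and increasing). -/
def lowerReach {X : Type*} [Fintype X] (Q : (X → ℝ) → (X → ℝ)) (x : X) (A : Set X) : Prop :=
  ∃ n : ℕ, (lowerStep Q)^[n] A = (lowerStep Q)^[n + 1] A ∧ x ∈ (lowerStep Q)^[n] A

/-- The set `𝒳_RA := {x : ∃ n ≥ 1, min T̄ⁿ 𝟙ₓ > 0}`. -/
noncomputable def XRA {X : Type*} [Fintype X] [Nonempty X]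
    (T : (X → ℝ) → (X → ℝ)) : Set X :=
  {x : X | ∃ n : ℕ, 0 < minf ((conjOp T)^[n + 1] (ind {x}))}

/-- A regularly absorbing lower transition operator. -/
def RegAbs {X : Type*} [Fintype X] [Nonempty X] (T : (X → ℝ) → (X → ℝ)) : Prop :=
  (XRA T).Nonempty ∧ ∀ x : X, x ∉ XRA T → ∃ n : ℕ, 0 < T^[n + 1] (ind (XRA T)) x

/-- The set `𝒳_1A := {x : min T̄ 𝟙ₓ > 0}`. -/
noncomputable def X1A {X : Type*} [Fintype X] [Nonempty X]
    (T : (X → ℝ) → (X → ℝ)) : Set X :=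
  {x : X | 0 < minf (conjOp T (ind {x}))}

/-- A 1-step absorbing lower transition operator. -/
def OneStepAbs {X : Type*} [Fintype X] [Nonempty X] (T : (X → ℝ) → (X → ℝ)) : Prop :=
  (X1A T).Nonempty ∧ ∀ x : X, x ∉ X1A T → 0 < T (ind (X1A T)) x

/-- The operator (sup) norm of a non-negatively homogeneous operator. -/
noncomputable def opN {X : Type*} [Fintype X] (Q : (X → ℝ) → (X → ℝ)) : ℝ :=
  sSup {r : ℝ | ∃ f : X → ℝ, ‖f‖ = 1 ∧ r = ‖Q f‖}

section Aux

set_option linter.unusedSectionVars false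

variable {X : Type*} [Fintype X] [Nonempty X]

/-! ### minf / maxf basics -/

lemma minf_le (f : X → ℝ) (x : X) : minf f ≤ f x :=
  Finset.inf'_le _ (Finset.mem_univ x)

lemma le_minf {f : X → ℝ} {c : ℝ} (h : ∀ x, c ≤ f x) : c ≤ minf f :=
  Finset.le_inf' _ _ fun x _ => h x

lemma exists_minf (f : X → ℝ) : ∃ x, minf f = f x := by
  obtain ⟨x, -, hx⟩ := Finset.exists_mem_eq_inf' (Finset.univ_nonempty (α := X)) f
  exact ⟨x, hx⟩

lemma le_maxf (f : X → ℝ) (x : X) : f x ≤ maxf f :=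
  Finset.le_sup' _ (Finset.mem_univ x)

lemma maxf_le {f : X → ℝ} {c : ℝ} (h : ∀ x, f x ≤ c) : maxf f ≤ c :=
  Finset.sup'_le _ _ fun x _ => h x

lemma exists_maxf (f : X → ℝ) : ∃ x, maxf f = f x := by
  obtain ⟨x, -, hx⟩ := Finset.exists_mem_eq_sup' (Finset.univ_nonempty (α := X)) f
  exact ⟨x, hx⟩

lemma minf_const (c : ℝ) : minf (fun _ : X => c) = c := by
  obtain ⟨x, hx⟩ := exists_minf (fun _ : X => c); rw [hx]

lemma maxf_const (c : ℝ) : maxf (fun _ : X => c) = c := by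
  obtain ⟨x, hx⟩ := exists_maxf (fun _ : X => c); rw [hx]

lemma minf_neg (f : X → ℝ) : minf (-f) = -maxf f := by
  apply le_antisymm
  · obtain ⟨x, hx⟩ := exists_maxf f
    calc minf (-f) ≤ (-f) x := minf_le _ x
    _ = -maxf f := by rw [hx]; rfl
  · exact le_minf fun x => by simpa using le_maxf f x

lemma maxf_neg (f : X → ℝ) : maxf (-f) = -minf f := by
  have := minf_neg (-f); rw [neg_neg] at this; linarith

lemma minf_le_maxf (f : X → ℝ) : minf f ≤ maxf f := by
  obtain ⟨x, hx⟩ := exists_minf f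
  exact hx ▸ le_maxf f x

lemma minf_dist_le (f g : X → ℝ) : dist (minf f) (minf g) ≤ dist f g := by
  rw [Real.dist_eq, abs_le]
  constructor
  · obtain ⟨x, hx⟩ := exists_minf f
    have h1 : minf g ≤ g x := minf_le g x
    have habs : |f x - g x| ≤ dist f g := by
      simpa [Real.dist_eq] using dist_le_pi_dist f g x
    obtain ⟨hl, hr⟩ := abs_le.mp habs
    rw [hx]; linarith
  · obtain ⟨x, hx⟩ := exists_minf g
    have h1 : minf f ≤ f x := minf_le f x
    have habs : |f x - g x| ≤ dist f g := by
      simpa [Real.dist_eq] using dist_le_pi_dist f g x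
    obtain ⟨hl, hr⟩ := abs_le.mp habs
    rw [hx]; linarith

lemma lipschitz_minf : LipschitzWith 1 (minf : (X → ℝ) → ℝ) :=
  LipschitzWith.of_dist_le_mul fun f g => by simpa using minf_dist_le f g

lemma continuous_minf : Continuous (minf : (X → ℝ) → ℝ) := lipschitz_minf.continuous

lemma maxf_dist_le (f g : X → ℝ) : dist (maxf f) (maxf g) ≤ dist f g := by
  have h1 : maxf f = -(minf (-f)) := by rw [minf_neg]; ring
  have h2 : maxf g = -(minf (-g)) := by rw [minf_neg]; ring
  calc dist (maxf f) (maxf g) = dist (minf (-f)) (minf (-g)) := by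
        rw [h1, h2, dist_neg_neg]
  _ ≤ dist (-f) (-g) := minf_dist_le _ _
  _ = dist f g := dist_neg_neg f g

lemma continuous_maxf : Continuous (maxf : (X → ℝ) → ℝ) :=
  (LipschitzWith.of_dist_le_mul (K := 1)
    fun f g => by simpa using maxf_dist_le f g).continuous

/-! ### indicator basics -/

lemma ind_mem {A : Set X} {x : X} (h : x ∈ A) : ind A x = 1 :=
  Set.indicator_of_mem h 1

lemma ind_notmem {A : Set X} {x : X} (h : x ∉ A) : ind A x = 0 :=
  Set.indicator_of_notMem h 1

lemma ind_nonneg (A : Set X) (x : X) : 0 ≤ ind A x := by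
  by_cases h : x ∈ A
  · rw [ind_mem h]; norm_num
  · rw [ind_notmem h]

lemma ind_le_one (A : Set X) (x : X) : ind A x ≤ 1 := by
  by_cases h : x ∈ A
  · rw [ind_mem h]
  · rw [ind_notmem h]; norm_num

lemma ind_compl (A : Set X) : ind Aᶜ = (fun _ => 1) - ind A := by
  funext x
  by_cases h : x ∈ A
  · rw [Pi.sub_apply, ind_mem h, ind_notmem (by simpa using h : x ∉ Aᶜ)]
    norm_num
  · rw [Pi.sub_apply, ind_notmem h, ind_mem (by simpa using h : x ∈ Aᶜ)]
    norm_num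

lemma eq_sum_ind (f : X → ℝ) : f = ∑ y : X, f y • ind {y} := by
  funext x
  rw [Finset.sum_apply]
  rw [Finset.sum_eq_single x]
  · rw [Pi.smul_apply, ind_mem (Set.mem_singleton x), smul_eq_mul, mul_one]
  · intro y _ hy
    rw [Pi.smul_apply, ind_notmem (show x ∉ ({y} : Set X) by
      simp [Set.mem_singleton_iff]; exact fun h => hy h.symm), smul_eq_mul, mul_zero]
  · intro h; exact absurd (Finset.mem_univ x) h

lemma ind_univ : ind (Set.univ : Set X) = fun _ => 1 := by
  funext x; exact ind_mem (Set.mem_univ x)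

/-! ### shift lemmas for minf/maxf -/

lemma minf_shift (f : X → ℝ) (c : ℝ) : minf (fun y => f y + c) = minf f + c := by
  apply le_antisymm
  · obtain ⟨x, hx⟩ := exists_minf f
    calc minf (fun y => f y + c) ≤ f x + c := minf_le (fun y => f y + c) x
    _ = minf f + c := by rw [hx]
  · exact le_minf fun y => add_le_add_left (minf_le f y) c

lemma maxf_shift (f : X → ℝ) (c : ℝ) : maxf (fun y => f y + c) = maxf f + c := by
  apply le_antisymm
  · exact maxf_le fun y => add_le_add_left (le_maxf f y) c
  · obtain ⟨x, hx⟩ := exists_maxf f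
    calc maxf f + c = f x + c := by rw [hx]
    _ ≤ maxf (fun y => f y + c) := le_maxf (fun y => f y + c) x

/-! ### lower transition rate operator basics -/

variable {Q : (X → ℝ) → (X → ℝ)}

lemma Q_const (hQ : IsLTRO Q) (c : ℝ) : Q (fun _ => c) = 0 := hQ.1 c

lemma Q_zero (hQ : IsLTRO Q) : Q 0 = 0 := hQ.1 0

lemma Q_superadd (hQ : IsLTRO Q) (f g : X → ℝ) : Q f + Q g ≤ Q (f + g) := hQ.2.1 f g

lemma Q_homog (hQ : IsLTRO Q) {l : ℝ} (hl : 0 ≤ l) (f : X → ℝ) :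
    Q (l • f) = l • Q f := hQ.2.2.1 l hl f

lemma Q_shift (hQ : IsLTRO Q) (f : X → ℝ) (c : ℝ) : Q (f + fun _ => c) = Q f := by
  apply le_antisymm
  · have h2 := hQ.2.1 (f + fun _ => c) (fun _ => -c)
    rw [Q_const hQ, add_zero] at h2
    have : (f + fun _ => c) + (fun _ => -c) = f := by funext y; simp
    rwa [this] at h2
  · have h1 := hQ.2.1 f (fun _ => c)
    rwa [Q_const hQ, add_zero] at h1

lemma Q_sum_le (hQ : IsLTRO Q) {ι : Type*} (s : Finset ι) (F : ι → X → ℝ) :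
    ∑ i ∈ s, Q (F i) ≤ Q (∑ i ∈ s, F i) := by
  classical
  induction s using Finset.induction_on with
  | empty => simp [Q_zero hQ]
  | insert _ _ hnotmem ih =>
    rw [Finset.sum_insert hnotmem, Finset.sum_insert hnotmem]
    calc Q (F _) + ∑ i ∈ _, Q (F i) ≤ Q (F _) + Q (∑ i ∈ _, F i) :=
          add_le_add_right ih _
    _ ≤ _ := hQ.2.1 _ _

lemma Q_nonneg_of (hQ : IsLTRO Q) {g : X → ℝ} {x : X} (hg : ∀ y, 0 ≤ g y)
    (hx : g x = 0) : 0 ≤ Q g x := by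
  have hdec := eq_sum_ind g
  have hle : ∑ y : X, Q (g y • ind {y}) ≤ Q g := by
    conv_rhs => rw [hdec]
    exact Q_sum_le hQ _ _
  have hev : (∑ y : X, Q (g y • ind {y})) x ≤ Q g x := hle x
  rw [Finset.sum_apply] at hev
  refine le_trans (Finset.sum_nonneg fun y _ => ?_) hev
  rw [Q_homog hQ (hg y), Pi.smul_apply, smul_eq_mul]
  rcases eq_or_ne y x with rfl | hyx
  · rw [hx, zero_mul]
  · exact mul_nonneg (hg y) (hQ.2.2.2 x y (Ne.symm hyx))

lemma Q_min (hQ : IsLTRO Q) {h : X → ℝ} {x : X} (hx : h x = minf h) : 0 ≤ Q h x := by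
  have hrw : h = (fun y => h y - h x) + fun _ => h x := by funext y; simp
  have : Q h = Q (fun y => h y - h x) := by
    conv_lhs => rw [hrw]
    exact Q_shift hQ _ _
  rw [this]
  exact Q_nonneg_of hQ (fun y => by
    have := minf_le h y; simp only [sub_nonneg]; linarith [hx ▸ this]) (by simp)

lemma Q_neg_bound (hQ : IsLTRO Q) (g : X → ℝ) (x : X) :
    Q g x + Q (-g) x ≤ 0 := by
  have h := hQ.2.1 g (-g)
  have : g + -g = (0 : X → ℝ) := by funext y; simp
  rw [this, Q_zero hQ] at h
  exact h x

lemma Q_max (hQ : IsLTRO Q) {h : X → ℝ} {x : X} (hx : h x = maxf h) : Q h x ≤ 0 := by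
  have hrw : h = (fun y => h y - h x) + fun _ => h x := by funext y; simp
  have hQeq : Q h = Q (fun y => h y - h x) := by
    conv_lhs => rw [hrw]
    exact Q_shift hQ _ _
  set g : X → ℝ := fun y => h y - h x with hg
  have hneg : 0 ≤ Q (-g) x := by
    refine Q_nonneg_of hQ (fun y => ?_) (by simp [hg])
    have := le_maxf h y
    simp only [Pi.neg_apply, hg, neg_sub, sub_nonneg]
    linarith [hx ▸ this]
  have := Q_neg_bound hQ g x
  rw [hQeq]
  linarith

/-- A uniform bound on the diagonal rates. -/
noncomputable def QC (Q : (X → ℝ) → (X → ℝ)) : ℝ := maxf (fun z => -(Q (ind {z}) z))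

lemma Q_ind_diag_nonpos (hQ : IsLTRO Q) (z : X) : Q (ind {z}) z ≤ 0 := by
  have hmax : ind ({z} : Set X) z = maxf (ind ({z} : Set X)) :=
    le_antisymm (le_maxf (ind ({z} : Set X)) z)
      (maxf_le fun y => by rw [ind_mem (Set.mem_singleton z)]; exact ind_le_one _ y)
  exact Q_max hQ hmax

lemma le_QC (x : X) : -(Q (ind {x}) x) ≤ QC Q :=
  le_maxf (fun z => -(Q (ind {z}) z)) x

lemma QC_nonneg (hQ : IsLTRO Q) : 0 ≤ QC Q := by
  obtain ⟨z⟩ := (inferInstance : Nonempty X)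
  calc (0:ℝ) ≤ -(Q (ind {z}) z) := by linarith [Q_ind_diag_nonpos hQ z]
  _ ≤ QC Q := le_QC z

lemma Q_lower (hQ : IsLTRO Q) (h : X → ℝ) (x : X) :
    -(QC Q * (h x - minf h)) ≤ Q h x := by
  classical
  set w : X → ℝ := fun y => h y - minf h with hw
  have hwnn : ∀ y, 0 ≤ w y := fun y => by simp [hw, sub_nonneg, minf_le h y]
  have hrw : h = w + fun _ => minf h := by funext y; simp [hw]
  have hQeq : Q h = Q w := by conv_lhs => rw [hrw]; exact Q_shift hQ _ _
  have hle : ∑ y : X, Q (w y • ind {y}) ≤ Q w := by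
    conv_rhs => rw [eq_sum_ind w]
    exact Q_sum_le hQ _ _
  have hev : ∑ y : X, w y * Q (ind {y}) x ≤ Q w x := by
    refine le_trans (le_of_eq ?_) (hle x)
    rw [Finset.sum_apply]
    exact Finset.sum_congr rfl fun y _ => by
      rw [Q_homog hQ (hwnn y), Pi.smul_apply, smul_eq_mul]
  have hsplit : ∑ y : X, w y * Q (ind {y}) x
      = ∑ y ∈ Finset.univ \ {x}, w y * Q (ind {y}) x + w x * Q (ind {x}) x :=
    Finset.sum_eq_sum_sdiff_singleton_add (Finset.mem_univ x) _
  have hrest : 0 ≤ ∑ y ∈ Finset.univ \ {x}, w y * Q (ind {y}) x := by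
    refine Finset.sum_nonneg fun y hy => ?_
    have hyx : y ≠ x := by
      intro hxy; rw [Finset.mem_sdiff, Finset.mem_singleton] at hy; exact hy.2 hxy
    exact mul_nonneg (hwnn y) (hQ.2.2.2 x y (Ne.symm hyx))
  have hdiag : -(QC Q) ≤ Q (ind {x}) x := by
    have := le_QC (Q := Q) x
    linarith
  have hwx : w x = h x - minf h := rfl
  have hstep : w x * (-(QC Q)) ≤ w x * Q (ind {x}) x :=
    mul_le_mul_of_nonneg_left hdiag (hwnn x)
  rw [hQeq]
  calc -(QC Q * (h x - minf h)) = w x * (-(QC Q)) := by rw [hwx]; ring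
  _ ≤ w x * Q (ind {x}) x := hstep
  _ ≤ ∑ y ∈ Finset.univ \ {x}, w y * Q (ind {y}) x + w x * Q (ind {x}) x := by linarith
  _ = ∑ y : X, w y * Q (ind {y}) x := hsplit.symm
  _ ≤ Q w x := hev

lemma Q_lipschitz (hQ : IsLTRO Q) :
    LipschitzWith (Real.toNNReal (2 * QC Q)) Q := by
  have hC := QC_nonneg hQ
  apply LipschitzWith.of_dist_le_mul
  intro f g
  have hcoe : ((Real.toNNReal (2 * QC Q)) : ℝ) = 2 * QC Q :=
    Real.coe_toNNReal _ (by linarith)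
  rw [hcoe]
  rw [dist_pi_le_iff (by positivity)]
  intro x
  have key : ∀ u v : X → ℝ, Q u x - Q v x ≤ 2 * QC Q * dist u v := by
    intro u v
    have hsup := hQ.2.1 (u - v) v
    have : u - v + v = u := by funext y; simp
    rw [this] at hsup
    have h1 : Q (u - v) x + Q v x ≤ Q u x := hsup x
    -- so Q u x - Q v x ≥ Q (u-v) x; we need upper bound, use other side:
    have hsup2 := hQ.2.1 (v - u) u
    have h2e : v - u + u = v := by funext y; simp
    rw [h2e] at hsup2
    have h2 : Q (v - u) x + Q u x ≤ Q v x := hsup2 x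
    have hlow := Q_lower hQ (v - u) x
    have hb1 : (v - u) x ≤ dist u v := by
      have := dist_le_pi_dist v u x
      rw [Real.dist_eq] at this
      calc (v - u) x = v x - u x := rfl
      _ ≤ |v x - u x| := le_abs_self _
      _ ≤ dist v u := this
      _ = dist u v := dist_comm v u
    have hb2 : -(dist u v) ≤ minf (v - u) := by
      apply le_minf
      intro y
      have := dist_le_pi_dist v u x
      have h3 := dist_le_pi_dist v u y
      rw [Real.dist_eq] at h3
      have : -(dist v u) ≤ v y - u y := by
        have := neg_abs_le (v y - u y); linarith
      calc -(dist u v) = -(dist v u) := by rw [dist_comm]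
      _ ≤ v y - u y := this
      _ = (v - u) y := rfl
    have : -(QC Q * ((v - u) x - minf (v - u))) ≤ Q (v - u) x := hlow
    have hfin : -(2 * QC Q * dist u v) ≤ Q (v - u) x := by
      have hprod : QC Q * ((v - u) x - minf (v - u)) ≤ QC Q * (2 * dist u v) := by
        apply mul_le_mul_of_nonneg_left _ hC
        linarith
      linarith
    linarith
  rw [Real.dist_eq, abs_le]
  constructor
  · have := key g f; rw [dist_comm] at this; linarith
  · linarith [key f g]

/-! ### ODE facts -/

variable {T : ℝ → (X → ℝ) → (X → ℝ)}

lemma T_contOn (hT : IsSol Q T) (f : X → ℝ) :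
    ContinuousOn (fun s => T s f) (Set.Ici 0) :=
  fun s hs => (hT.2 f s hs).continuousWithinAt

lemma sol_unique (hQ : IsLTRO Q) (hT : IsSol Q T) {f : X → ℝ} (g : ℝ → X → ℝ)
    (hg0 : g 0 = f)
    (hg' : ∀ s, 0 ≤ s → HasDerivWithinAt g (Q (g s)) (Set.Ici 0) s) :
    ∀ s, 0 ≤ s → T s f = g s := by
  intro s hs
  have huniq := ODE_solution_unique (v := fun _ p => Q p)
    (K := Real.toNNReal (2 * QC Q)) (fun _ => Q_lipschitz hQ)
    (f := fun w => T w f) (g := g) (a := 0) (b := s)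
    ((T_contOn hT f).mono (Set.Icc_subset_Ici_self))
    (fun w hw => (hT.2 f w hw.1).mono (Set.Ici_subset_Ici.mpr hw.1))
    (fun w hw => (hg' w hw.1).continuousWithinAt.mono (Set.Icc_subset_Ici_self) :
      ContinuousOn g (Set.Icc 0 s))
    (fun w hw => (hg' w hw.1).mono (Set.Ici_subset_Ici.mpr hw.1))
    (by show T 0 f = g 0; rw [hT.1, hg0])
  exact huniq (Set.right_mem_Icc.mpr hs)

lemma T_const (hQ : IsLTRO Q) (hT : IsSol Q T) (c : ℝ) {s : ℝ} (hs : 0 ≤ s) :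
    T s (fun _ => c) = fun _ => c := by
  exact sol_unique hQ hT (fun _ _ => c) rfl (fun w hw => by
    show HasDerivWithinAt (fun _ : ℝ => fun _ : X => c) (Q (fun _ : X => c)) (Set.Ici 0) w
    rw [Q_const hQ]
    exact hasDerivWithinAt_const w _ _) s hs

lemma T_shift (hQ : IsLTRO Q) (hT : IsSol Q T) (f : X → ℝ) (c : ℝ) {s : ℝ}
    (hs : 0 ≤ s) : T s (f + fun _ => c) = T s f + fun _ => c := by
  exact sol_unique hQ hT (fun w => T w f + fun _ => c) (by simp only [hT.1])
    (fun w hw => by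
      show HasDerivWithinAt (fun w => T w f + fun _ => c)
        (Q (T w f + fun _ => c)) (Set.Ici 0) w
      rw [Q_shift hQ]
      exact (hT.2 f w hw).add_const _) s hs

lemma T_homog (hQ : IsLTRO Q) (hT : IsSol Q T) {l : ℝ} (hl : 0 ≤ l) (f : X → ℝ)
    {s : ℝ} (hs : 0 ≤ s) : T s (l • f) = l • T s f := by
  exact sol_unique hQ hT (fun w => l • T w f) (by simp only [hT.1])
    (fun w hw => by
      show HasDerivWithinAt (fun w => l • T w f) (Q (l • T w f)) (Set.Ici 0) w
      rw [Q_homog hQ hl]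
      exact (hT.2 f w hw).const_smul l) s hs

lemma T_semigroup (hQ : IsLTRO Q) (hT : IsSol Q T) (f : X → ℝ) {s r : ℝ}
    (hs : 0 ≤ s) (hr : 0 ≤ r) : T s (T r f) = T (s + r) f := by
  have h := sol_unique hQ hT (f := T r f) (fun w => T (w + r) f)
    (by show T (0 + r) f = T r f; rw [zero_add])
    (fun w hw => by
      have h1 : HasDerivWithinAt (fun z => T z f) (Q (T (w + r) f)) (Set.Ici 0) (w + r) :=
        hT.2 f (w + r) (by linarith)
      have h2 : HasDerivWithinAt (fun z : ℝ => z + r) 1 (Set.Ici 0) w :=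
        (hasDerivWithinAt_id w _).add_const r
      have h3 := HasDerivWithinAt.scomp w h1 h2 (fun z hz => by
        simp only [Set.mem_Ici] at hz ⊢; linarith)
      rw [one_smul] at h3; exact h3) s hs
  exact h

lemma T_iterate (hQ : IsLTRO Q) (hT : IsSol Q T) (f : X → ℝ) {t : ℝ} (ht : 0 ≤ t) :
    ∀ n : ℕ, (T t)^[n] f = T (n * t) f := by
  intro n
  induction n with
  | zero => simp [hT.1]
  | succ n ih =>
    rw [Function.iterate_succ_apply', ih, T_semigroup hQ hT f ht (by positivity)]
    congr 1
    push_cast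
    ring

/-! ### Dini-type monotonicity of the pointwise minimum along the flow -/

lemma diniMin {u v : ℝ → X → ℝ} {a b : ℝ} (hab : a ≤ b)
    (hu : ∀ s ∈ Set.Icc a b, HasDerivWithinAt u (v s) (Set.Ici s) s)
    (hcont : ContinuousOn u (Set.Icc a b))
    (hv : ∀ s ∈ Set.Icc a b, ∀ x, u s x = minf (u s) → 0 ≤ v s x) :
    minf (u a) ≤ minf (u b) := by
  have key : ∀ ε > (0:ℝ), -(minf (u b)) ≤ -(minf (u a)) + ε * (b - a) := by
    intro ε hε
    have main := image_le_of_liminf_slope_right_lt_deriv_boundary'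
      (f := fun s => -(minf (u s))) (f' := fun _ => 0)
      (B := fun s => -(minf (u a)) + ε * (s - a)) (B' := fun _ => ε)
      (a := a) (b := b)
      ((continuous_minf.comp_continuousOn hcont).neg)
      ?_
      (by simp)
      ((continuous_const.add (continuous_const.mul (continuous_id.sub continuous_const))).continuousOn)
      (fun s _ => by
        have : HasDerivAt (fun z : ℝ => -(minf (u a)) + ε * (z - a)) ε s := by
          simpa using (((hasDerivAt_id s).sub_const a).const_mul ε).const_add
            (-(minf (u a)))
        exact this.hasDerivWithinAt)
      (fun s _ _ => hε)
    · simpa using main (Set.right_mem_Icc.mpr hab)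
    · -- liminf slope condition
      intro s hs r hr
      have hsIcc : s ∈ Set.Icc a b := ⟨hs.1, hs.2.le⟩
      have hev : ∀ x : X, ∀ᶠ z in 𝓝[>] s, minf (u s) - r * (z - s) < u z x := by
        intro x
        have hco : HasDerivWithinAt (fun w => u w x) (v s x) (Set.Ici s) s :=
          (ContinuousLinearMap.proj x :
            (X → ℝ) →L[ℝ] ℝ).hasFDerivAt.comp_hasDerivWithinAt s (hu s hsIcc)
        by_cases hx : u s x = minf (u s)
        · have hslope : Filter.Tendsto (slope (fun w => u w x) s) (𝓝[>] s)
              (𝓝 (v s x)) :=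
            (hasDerivWithinAt_iff_tendsto_slope' (lt_irrefl s)).1 hco.Ioi_of_Ici
          have hvs : 0 ≤ v s x := hv s hsIcc x hx
          have hr' : (0:ℝ) < r := hr
          have hevs : ∀ᶠ z in 𝓝[>] s, -r < slope (fun w => u w x) s z :=
            hslope (Ioi_mem_nhds (by linarith))
          filter_upwards [hevs, self_mem_nhdsWithin] with z hz hz'
          rw [Set.mem_Ioi] at hz'
          rw [slope_def_field] at hz
          have hzs : (0:ℝ) < z - s := by linarith
          rw [lt_div_iff₀ hzs] at hz
          rw [hx] at hz
          linarith
        · have hgt : minf (u s) < u s x :=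
            lt_of_le_of_ne (minf_le (u s) x) (fun h => hx h.symm)
          have ht : Filter.Tendsto (fun w => u w x) (𝓝[>] s) (𝓝 (u s x)) :=
            hco.continuousWithinAt.mono Set.Ioi_subset_Ici_self
          have hevs : ∀ᶠ z in 𝓝[>] s, minf (u s) < u z x := ht (Ioi_mem_nhds hgt)
          filter_upwards [hevs, self_mem_nhdsWithin] with z hz hz'
          rw [Set.mem_Ioi] at hz'
          nlinarith [mul_pos hr (sub_pos.mpr hz')]
      have hfin : ∀ᶠ z in 𝓝[>] s,
          slope (fun w => -(minf (u w))) s z < r := by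
        filter_upwards [Filter.eventually_all.2 hev, self_mem_nhdsWithin] with z hz hz'
        rw [Set.mem_Ioi] at hz'
        have hzm : minf (u s) - r * (z - s) < minf (u z) := by
          obtain ⟨x, hx⟩ := exists_minf (u z)
          rw [hx]; exact hz x
        rw [slope_def_field, div_lt_iff₀ (by linarith : (0:ℝ) < z - s)]
        linarith
      exact hfin.frequently
  by_contra hlt
  push_neg at hlt
  rcases eq_or_lt_of_le hab with rfl | hab'
  · exact absurd hlt (lt_irrefl _)
  · have hk := key ((minf (u a) - minf (u b)) / (2 * (b - a)))
      (div_pos (by linarith) (by linarith))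
    have hc : b - a ≠ 0 := by linarith
    have hexp : (minf (u a) - minf (u b)) / (2 * (b - a)) * (b - a)
        = (minf (u a) - minf (u b)) / 2 := by
      rw [div_mul_eq_mul_div, mul_comm 2 (b - a), ← div_div,
        mul_div_assoc, div_self hc, mul_one]
    rw [hexp] at hk
    linarith

/-! ### Flow corollaries -/

lemma minf_T_mono (hQ : IsLTRO Q) (hT : IsSol Q T) (f : X → ℝ) {a b : ℝ}
    (ha : 0 ≤ a) (hab : a ≤ b) : minf (T a f) ≤ minf (T b f) := by
  refine diniMin (u := fun s => T s f) (v := fun s => Q (T s f)) hab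
    (fun s hs => (hT.2 f s (le_trans ha hs.1)).mono
      (Set.Ici_subset_Ici.mpr (le_trans ha hs.1)))
    ((T_contOn hT f).mono (fun s hs => le_trans ha hs.1))
    (fun s hs x hx => Q_min hQ hx)

lemma maxf_T_anti (hQ : IsLTRO Q) (hT : IsSol Q T) (f : X → ℝ) {a b : ℝ}
    (ha : 0 ≤ a) (hab : a ≤ b) : maxf (T b f) ≤ maxf (T a f) := by
  have h := diniMin (u := fun s => -(T s f)) (v := fun s => -(Q (T s f))) hab
    (fun s hs => ((hT.2 f s (le_trans ha hs.1)).mono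
      (Set.Ici_subset_Ici.mpr (le_trans ha hs.1))).neg)
    (((T_contOn hT f).mono (fun s hs => le_trans ha hs.1)).neg)
    (fun s hs x hx => by
      simp only [Pi.neg_apply] at hx ⊢
      rw [minf_neg] at hx
      have hmax : T s f x = maxf (T s f) := by linarith
      linarith [Q_max hQ hmax])
  have h' : -(maxf (T a f)) ≤ -(maxf (T b f)) := by
    rw [← minf_neg, ← minf_neg]; exact h
  linarith

lemma T_mono (hQ : IsLTRO Q) (hT : IsSol Q T) {f g : X → ℝ} (hfg : f ≤ g)
    {s : ℝ} (hs : 0 ≤ s) : T s f ≤ T s g := by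
  have h := diniMin (u := fun r => T r g - T r f)
    (v := fun r => Q (T r g) - Q (T r f)) (a := 0) (b := s) hs
    (fun r hr => ((hT.2 g r hr.1).sub (hT.2 f r hr.1)).mono
      (Set.Ici_subset_Ici.mpr hr.1))
    (((T_contOn hT g).mono (fun r hr => hr.1)).sub
      ((T_contOn hT f).mono (fun r hr => hr.1)))
    (fun r hr x hx => by
      have hsup := Q_superadd hQ (T r f) (T r g - T r f)
      have heq : T r f + (T r g - T r f) = T r g := by funext y; simp
      rw [heq] at hsup
      have h1 : Q (T r f) x + Q (T r g - T r f) x ≤ Q (T r g) x := hsup x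
      have h2 : 0 ≤ Q (T r g - T r f) x := Q_min hQ hx
      simp only [Pi.sub_apply]
      linarith)
  rw [Pi.le_def]
  intro x
  have h0 : (0:ℝ) ≤ minf (T 0 g - T 0 f) := by
    rw [hT.1, hT.1]
    exact le_minf fun y => by simpa using hfg y
  have h1 : (0:ℝ) ≤ minf (T s g - T s f) := le_trans h0 h
  have h2 := le_trans h1 (minf_le (T s g - T s f) x)
  simpa using h2

lemma T_superadd (hQ : IsLTRO Q) (hT : IsSol Q T) (f g : X → ℝ) {s : ℝ}
    (hs : 0 ≤ s) : T s f + T s g ≤ T s (f + g) := by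
  have h := diniMin (u := fun r => T r (f + g) - (T r f + T r g))
    (v := fun r => Q (T r (f + g)) - (Q (T r f) + Q (T r g))) (a := 0) (b := s) hs
    (fun r hr => ((hT.2 (f + g) r hr.1).sub
      ((hT.2 f r hr.1).add (hT.2 g r hr.1))).mono (Set.Ici_subset_Ici.mpr hr.1))
    (((T_contOn hT (f + g)).mono (fun r hr => hr.1)).sub
      (((T_contOn hT f).mono (fun r hr => hr.1)).add
        ((T_contOn hT g).mono (fun r hr => hr.1))))
    (fun r hr x hx => by
      have hsup1 := Q_superadd hQ (T r f + T r g) (T r (f + g) - (T r f + T r g))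
      have heq : T r f + T r g + (T r (f + g) - (T r f + T r g)) = T r (f + g) := by
        funext y; simp
      rw [heq] at hsup1
      have hsup2 := Q_superadd hQ (T r f) (T r g)
      have h1 : Q (T r f + T r g) x + Q (T r (f + g) - (T r f + T r g)) x
          ≤ Q (T r (f + g)) x := hsup1 x
      have h2 : Q (T r f) x + Q (T r g) x ≤ Q (T r f + T r g) x := hsup2 x
      have h3 : 0 ≤ Q (T r (f + g) - (T r f + T r g)) x := Q_min hQ hx
      simp only [Pi.sub_apply, Pi.add_apply]
      linarith)
  rw [Pi.le_def]
  intro x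
  have h0 : (0:ℝ) ≤ minf (T 0 (f + g) - (T 0 f + T 0 g)) := by
    rw [hT.1, hT.1, hT.1]
    exact le_minf fun y => by simp
  have h1 : (0:ℝ) ≤ minf (T s (f + g) - (T s f + T s g)) := le_trans h0 h
  have h2 := le_trans h1 (minf_le (T s (f + g) - (T s f + T s g)) x)
  simp only [Pi.sub_apply, Pi.add_apply] at h2
  simp only [Pi.add_apply]
  linarith

/-! ### The package of properties of a lower transition operator -/

structure LTOpkg (S : (X → ℝ) → (X → ℝ)) : Prop where
  mono : ∀ {f g : X → ℝ}, f ≤ g → S f ≤ S g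
  superadd : ∀ f g : X → ℝ, S f + S g ≤ S (f + g)
  homog : ∀ {l : ℝ}, 0 ≤ l → ∀ f : X → ℝ, S (l • f) = l • S f
  shift : ∀ (f : X → ℝ) (c : ℝ), S (f + fun _ => c) = S f + fun _ => c
  minf_mono : ∀ f : X → ℝ, minf f ≤ minf (S f)
  maxf_anti : ∀ f : X → ℝ, maxf (S f) ≤ maxf f

lemma T_pkg (hQ : IsLTRO Q) (hT : IsSol Q T) {t : ℝ} (ht : 0 ≤ t) :
    LTOpkg (T t) where
  mono := fun hfg => T_mono hQ hT hfg ht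
  superadd := fun f g => T_superadd hQ hT f g ht
  homog := fun hl f => T_homog hQ hT hl f ht
  shift := fun f c => T_shift hQ hT f c ht
  minf_mono := fun f => by
    have := minf_T_mono hQ hT f (le_refl 0) ht
    rwa [hT.1] at this
  maxf_anti := fun f => by
    have := maxf_T_anti hQ hT f (le_refl 0) ht
    rwa [hT.1] at this

/-! ### Conjugate (upper) operator algebra -/

variable {S : (X → ℝ) → (X → ℝ)}

lemma S_zero (hS : LTOpkg S) : S 0 = 0 := by
  have := hS.homog (le_refl 0) 0
  simpa using this

lemma S_const (hS : LTOpkg S) (c : ℝ) : S (fun _ => c) = fun _ => c := by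
  have h := hS.shift 0 c
  rw [S_zero hS] at h
  simpa using h

lemma S_le_maxf (hS : LTOpkg S) (f : X → ℝ) (x : X) : S f x ≤ maxf f :=
  le_trans (le_maxf (S f) x) (hS.maxf_anti f)

lemma minf_le_S (hS : LTOpkg S) (f : X → ℝ) (x : X) : minf f ≤ S f x :=
  le_trans (hS.minf_mono f) (minf_le (S f) x)

lemma U_mono (hS : LTOpkg S) {f g : X → ℝ} (h : f ≤ g) :
    conjOp S f ≤ conjOp S g := by
  have hneg : S (-g) ≤ S (-f) := hS.mono (fun x => by
    simp only [Pi.neg_apply, neg_le_neg_iff]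
    exact h x)
  intro x
  simp only [conjOp, Pi.neg_apply]
  linarith [hneg x]

lemma U_shift (hS : LTOpkg S) (f : X → ℝ) (c : ℝ) :
    conjOp S (f + fun _ => c) = conjOp S f + fun _ => c := by
  have h1 : -(f + fun _ : X => c) = -f + fun _ : X => -c := by funext y; simp; ring
  simp only [conjOp, h1, hS.shift (-f) (-c)]
  funext y; simp; ring

lemma U_homog (hS : LTOpkg S) {l : ℝ} (hl : 0 ≤ l) (f : X → ℝ) :
    conjOp S (l • f) = l • conjOp S f := by
  have h1 : -(l • f) = l • (-f) := by funext y; simp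
  simp only [conjOp, h1, hS.homog hl]
  funext y; simp

lemma U_subadd (hS : LTOpkg S) (f g : X → ℝ) :
    conjOp S (f + g) ≤ conjOp S f + conjOp S g := by
  have h := hS.superadd (-f) (-g)
  have h1 : -f + -g = -(f + g) := by funext y; simp; ring
  rw [h1] at h
  intro x
  have hx := h x
  simp only [Pi.add_apply] at hx
  simp only [conjOp, Pi.add_apply, Pi.neg_apply]
  linarith

lemma S_le_U (hS : LTOpkg S) (f : X → ℝ) : S f ≤ conjOp S f := by
  have h := hS.superadd f (-f)
  have h1 : f + -f = (0 : X → ℝ) := by funext y; simp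
  rw [h1, S_zero hS] at h
  intro x
  have hx := h x
  simp only [Pi.add_apply, Pi.zero_apply] at hx
  simp only [conjOp, Pi.neg_apply]
  linarith

lemma minf_le_U (hS : LTOpkg S) (f : X → ℝ) (x : X) : minf f ≤ conjOp S f x :=
  le_trans (minf_le_S hS f x) (S_le_U hS f x)

lemma U_le_maxf (hS : LTOpkg S) (f : X → ℝ) (x : X) : conjOp S f x ≤ maxf f := by
  have h := minf_le_S hS (-f) x
  rw [minf_neg] at h
  simp only [conjOp, Pi.neg_apply]
  linarith

lemma U_const (hS : LTOpkg S) (c : ℝ) :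
    conjOp S (fun _ => c) = fun _ => c := by
  simp only [conjOp]
  have h1 : -(fun _ : X => c) = (fun _ : X => -c) := by funext y; simp
  rw [h1, S_const hS]
  funext y; simp

/-! ### Iterates of the conjugate operator -/

lemma Un_mono (hS : LTOpkg S) (n : ℕ) {f g : X → ℝ} (h : f ≤ g) :
    (conjOp S)^[n] f ≤ (conjOp S)^[n] g := by
  induction n with
  | zero => simpa using h
  | succ n ih =>
    rw [Function.iterate_succ_apply', Function.iterate_succ_apply']
    exact U_mono hS ih

lemma Un_shift (hS : LTOpkg S) (n : ℕ) (f : X → ℝ) (c : ℝ) :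
    (conjOp S)^[n] (f + fun _ => c) = (conjOp S)^[n] f + fun _ => c := by
  induction n with
  | zero => simp
  | succ n ih =>
    rw [Function.iterate_succ_apply', Function.iterate_succ_apply', ih, U_shift hS]

lemma Un_homog (hS : LTOpkg S) (n : ℕ) {l : ℝ} (hl : 0 ≤ l) (f : X → ℝ) :
    (conjOp S)^[n] (l • f) = l • (conjOp S)^[n] f := by
  induction n with
  | zero => simp
  | succ n ih =>
    rw [Function.iterate_succ_apply', Function.iterate_succ_apply', ih, U_homog hS hl]

lemma Un_const (hS : LTOpkg S) (n : ℕ) (c : ℝ) :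
    (conjOp S)^[n] (fun _ => c) = fun _ => c := by
  induction n with
  | zero => simp
  | succ n ih => rw [Function.iterate_succ_apply', ih, U_const hS]

lemma Un_subadd (hS : LTOpkg S) (n : ℕ) (f g : X → ℝ) :
    (conjOp S)^[n] (f + g) ≤ (conjOp S)^[n] f + (conjOp S)^[n] g := by
  induction n with
  | zero => simp
  | succ n ih =>
    rw [Function.iterate_succ_apply', Function.iterate_succ_apply',
      Function.iterate_succ_apply']
    exact le_trans (U_mono hS ih) (U_subadd hS _ _)

lemma Un_zero (hS : LTOpkg S) (n : ℕ) : (conjOp S)^[n] (0 : X → ℝ) = 0 :=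
  Un_const hS n 0

lemma Un_sum_le (hS : LTOpkg S) (n : ℕ) {ι : Type*} (s : Finset ι)
    (F : ι → X → ℝ) :
    (conjOp S)^[n] (∑ i ∈ s, F i) ≤ ∑ i ∈ s, (conjOp S)^[n] (F i) := by
  classical
  induction s using Finset.induction_on with
  | empty => simp [Un_zero hS]
  | insert _ _ hnotmem ih =>
    rw [Finset.sum_insert hnotmem, Finset.sum_insert hnotmem]
    exact le_trans (Un_subadd hS n _ _) (add_le_add_right ih _)

lemma minf_Un_monotone (hS : LTOpkg S) (f : X → ℝ) :
    Monotone (fun n => minf ((conjOp S)^[n] f)) :=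
  monotone_nat_of_le_succ fun n => by
    rw [Function.iterate_succ_apply']
    exact le_minf fun x => minf_le_U hS _ x

lemma maxf_Un_antitone (hS : LTOpkg S) (f : X → ℝ) :
    Antitone (fun n => maxf ((conjOp S)^[n] f)) :=
  antitone_nat_of_succ_le fun n => by
    rw [Function.iterate_succ_apply']
    exact maxf_le fun x => U_le_maxf hS _ x

lemma Un_nonneg (hS : LTOpkg S) (n : ℕ) {f : X → ℝ} (hf : ∀ x, 0 ≤ f x) (x : X) :
    0 ≤ (conjOp S)^[n] f x := by
  have h0 : (0:ℝ) ≤ minf f := le_minf hf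
  have h1 : minf ((conjOp S)^[0] f) ≤ minf ((conjOp S)^[n] f) :=
    minf_Un_monotone hS f (Nat.zero_le n)
  simp only [Function.iterate_zero_apply] at h1
  exact le_trans (le_trans h0 h1) (minf_le _ x)

lemma Un_le_maxf (hS : LTOpkg S) (n : ℕ) (f : X → ℝ) (x : X) :
    (conjOp S)^[n] f x ≤ maxf f := by
  have h1 : maxf ((conjOp S)^[n] f) ≤ maxf ((conjOp S)^[0] f) :=
    maxf_Un_antitone hS f (Nat.zero_le n)
  simp only [Function.iterate_zero_apply] at h1
  exact le_trans (le_maxf _ x) h1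

lemma Un_dual (hS : LTOpkg S) (n : ℕ) : ∀ h : X → ℝ,
    (conjOp S)^[n] ((fun _ => 1) - h) = (fun _ => 1) - S^[n] h := by
  induction n with
  | zero => intro h; simp
  | succ n ih =>
    intro h
    have hU1 : conjOp S ((fun _ => 1) - h) = (fun _ => 1) - S h := by
      simp only [conjOp]
      have h1 : -((fun _ : X => (1:ℝ)) - h) = h + fun _ : X => (-1:ℝ) := by
        funext y; simp; ring
      rw [h1, hS.shift h (-1)]
      funext y; simp; ring
    rw [Function.iterate_succ_apply, Function.iterate_succ_apply, hU1, ih (S h)]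

lemma Un_smul_ind_le (hS : LTOpkg S) (n : ℕ) {g : X → ℝ} (hg : ∀ x, 0 ≤ g x)
    (z : X) (x : X) :
    g z * (conjOp S)^[n] (ind {z}) x ≤ (conjOp S)^[n] g x := by
  have hle : (g z • ind {z} : X → ℝ) ≤ g := by
    intro y
    rcases eq_or_ne y z with rfl | hyz
    · simp [ind_mem (Set.mem_singleton y)]
    · simp [ind_notmem (show y ∉ ({z} : Set X) from by simp [hyz]), hg y]
  have := Un_mono hS n hle x
  rwa [Un_homog hS n (hg z), Pi.smul_apply, smul_eq_mul] at this

/-! ### Iterates of S itself -/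

lemma minf_Sn_monotone (hS : LTOpkg S) (f : X → ℝ) :
    Monotone (fun n => minf (S^[n] f)) :=
  monotone_nat_of_le_succ fun n => by
    rw [Function.iterate_succ_apply']
    exact hS.minf_mono _

lemma maxf_Sn_antitone (hS : LTOpkg S) (f : X → ℝ) :
    Antitone (fun n => maxf (S^[n] f)) :=
  antitone_nat_of_succ_le fun n => by
    rw [Function.iterate_succ_apply']
    exact hS.maxf_anti _

lemma Sn_nonneg (hS : LTOpkg S) (n : ℕ) {f : X → ℝ} (hf : ∀ x, 0 ≤ f x) (x : X) :
    0 ≤ S^[n] f x := by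
  have h0 : (0:ℝ) ≤ minf f := le_minf hf
  have h1 : minf (S^[0] f) ≤ minf (S^[n] f) := minf_Sn_monotone hS f (Nat.zero_le n)
  simp only [Function.iterate_zero_apply] at h1
  exact le_trans (le_trans h0 h1) (minf_le _ x)

lemma Sn_le_maxf (hS : LTOpkg S) (n : ℕ) (f : X → ℝ) (x : X) :
    S^[n] f x ≤ maxf f := by
  have h1 : maxf (S^[n] f) ≤ maxf (S^[0] f) := maxf_Sn_antitone hS f (Nat.zero_le n)
  simp only [Function.iterate_zero_apply] at h1
  exact le_trans (le_maxf _ x) h1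

/-! ### Limit helper lemmas -/

lemma tendsto_minf_comp {F : ℕ → X → ℝ} {g : X → ℝ}
    (h : Filter.Tendsto F atTop (𝓝 g)) :
    Filter.Tendsto (fun n => minf (F n)) atTop (𝓝 (minf g)) :=
  (continuous_minf.tendsto g).comp h

lemma tendsto_maxf_comp {F : ℕ → X → ℝ} {g : X → ℝ}
    (h : Filter.Tendsto F atTop (𝓝 g)) :
    Filter.Tendsto (fun n => maxf (F n)) atTop (𝓝 (maxf g)) :=
  (continuous_maxf.tendsto g).comp h

lemma tendsto_sup' {s : Finset X} (hs : s.Nonempty) {F : ℕ → X → ℝ} {c : ℝ}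
    (h : ∀ z ∈ s, Filter.Tendsto (fun n => F n z) atTop (𝓝 c)) :
    Filter.Tendsto (fun n => s.sup' hs (F n)) atTop (𝓝 c) := by
  rw [Metric.tendsto_nhds]
  intro ε hε
  have hev : ∀ᶠ n in atTop, ∀ z ∈ s, dist (F n z) c < ε := by
    rw [Filter.eventually_all_finset]
    intro z hz
    exact (h z hz) (Metric.ball_mem_nhds c hε)
  filter_upwards [hev] with n hn
  obtain ⟨z0, hz0, hsup⟩ := Finset.exists_mem_eq_sup' hs (F n)
  have hs' := hs
  obtain ⟨z1, hz1⟩ := hs'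
  have h1 := hn z0 hz0
  have h2 := hn z1 hz1
  rw [Real.dist_eq, abs_lt] at h1 h2 ⊢
  constructor
  · have : F n z1 ≤ s.sup' hs (F n) := Finset.le_sup' _ hz1
    linarith
  · rw [hsup]; linarith

/-- The conjugate iterates in terms of the original iterates. -/
lemma Un_neg (n : ℕ) : ∀ h : X → ℝ, (conjOp S)^[n] h = -(S^[n] (-h)) := by
  induction n with
  | zero => intro h; simp
  | succ n ih =>
    intro h
    rw [Function.iterate_succ_apply, Function.iterate_succ_apply, ih (conjOp S h)]
    have : -(conjOp S h) = S (-h) := by simp [conjOp]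
    rw [this]

/-! ### Sufficiency: a regularly absorbing operator is ergodic -/

theorem U_ergodic_of_regAbs (hS : LTOpkg S) (hreg : RegAbs S) (g : X → ℝ) :
    ∃ c : ℝ, Filter.Tendsto (fun n => (conjOp S)^[n] g) atTop (𝓝 (fun _ => c)) := by
  classical
  obtain ⟨hAne, habs⟩ := hreg
  set A := XRA S with hA
  set mseq := fun n => minf ((conjOp S)^[n] g) with hmseq
  set Mseq := fun n => maxf ((conjOp S)^[n] g) with hMseq
  have hmono : Monotone mseq := minf_Un_monotone hS g
  have hanti : Antitone Mseq := maxf_Un_antitone hS g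
  have hmM : ∀ n, mseq n ≤ Mseq n := fun n => minf_le_maxf _
  have hbddm : BddAbove (Set.range mseq) := ⟨Mseq 0, by
    rintro x ⟨n, rfl⟩; exact le_trans (hmM n) (hanti (Nat.zero_le n))⟩
  have hbddM : BddBelow (Set.range Mseq) := ⟨mseq 0, by
    rintro x ⟨n, rfl⟩; exact le_trans (hmono (Nat.zero_le n)) (hmM n)⟩
  set m := ⨆ n, mseq n with hm
  set M := ⨅ n, Mseq n with hM
  have hmlim : Filter.Tendsto mseq atTop (𝓝 m) := tendsto_atTop_ciSup hmono hbddm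
  have hMlim : Filter.Tendsto Mseq atTop (𝓝 M) := tendsto_atTop_ciInf hanti hbddM
  have hmn_le : ∀ n, mseq n ≤ m := fun n => le_ciSup hbddm n
  have hMn_ge : ∀ n, M ≤ Mseq n := fun n => ciInf_le hbddM n
  have hmM' : m ≤ M := le_of_tendsto_of_tendsto' hmlim hMlim hmM
  -- Claim 1 : on A, values tend to m
  have claim1 : ∀ z ∈ A, Filter.Tendsto (fun n => (conjOp S)^[n] g z) atTop (𝓝 m) := by
    intro z hz
    obtain ⟨N', hN'⟩ := hz
    set N := N' + 1 with hN
    set εz := minf ((conjOp S)^[N] (ind {z})) with hεz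
    have hεzpos : 0 < εz := hN'
    have key : ∀ n, εz * ((conjOp S)^[n] g z - mseq n) ≤ mseq (n + N) - mseq n := by
      intro n
      set w : X → ℝ := (conjOp S)^[n] g + fun _ => -(mseq n) with hw
      have hwnn : ∀ y, 0 ≤ w y := fun y => by
        have h0 : mseq n ≤ (conjOp S)^[n] g y := minf_le _ y
        simp only [hw, Pi.add_apply]
        linarith
      have hshift : (conjOp S)^[N] w
          = (conjOp S)^[N] ((conjOp S)^[n] g) + fun _ => -(mseq n) :=
        Un_shift hS N _ _
      have hiter : (conjOp S)^[n + N] g = (conjOp S)^[N] ((conjOp S)^[n] g) := by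
        rw [Nat.add_comm, Function.iterate_add_apply]
      have hlow : ∀ y, mseq n + εz * w z ≤ (conjOp S)^[n + N] g y := by
        intro y
        have h1 := Un_smul_ind_le hS N hwnn z y
        have h2 : εz ≤ (conjOp S)^[N] (ind {z}) y := minf_le _ y
        have h3 : εz * w z ≤ (conjOp S)^[N] w y :=
          calc εz * w z = w z * εz := mul_comm _ _
          _ ≤ w z * (conjOp S)^[N] (ind {z}) y :=
              mul_le_mul_of_nonneg_left h2 (hwnn z)
          _ ≤ (conjOp S)^[N] w y := h1
        have h4 : (conjOp S)^[N] w y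
            = (conjOp S)^[n + N] g y - mseq n := by
          rw [hshift, ← hiter]; simp [sub_eq_add_neg]
        linarith
      have h5 : mseq n + εz * w z ≤ mseq (n + N) := le_minf fun y => hlow y
      have h6 : w z = (conjOp S)^[n] g z - mseq n := by simp [hw, sub_eq_add_neg]
      rw [h6] at h5
      linarith
    have h0 : ∀ n, 0 ≤ (conjOp S)^[n] g z - mseq n := fun n => by
      have := minf_le ((conjOp S)^[n] g) z; simp only [hmseq]; linarith
    have hup : Filter.Tendsto (fun n => mseq (n + N) - mseq n) atTop (𝓝 0) := by
      have h1 : Filter.Tendsto (fun n => mseq (n + N)) atTop (𝓝 m) :=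
        hmlim.comp (tendsto_add_atTop_nat N)
      simpa using h1.sub hmlim
    have hsq : Filter.Tendsto (fun n => (conjOp S)^[n] g z - mseq n) atTop (𝓝 0) := by
      have hb : ∀ n, (conjOp S)^[n] g z - mseq n ≤ (mseq (n + N) - mseq n) / εz := by
        intro n
        rw [le_div_iff₀ hεzpos, mul_comm]
        exact key n
      have hg0 : Filter.Tendsto (fun n => (mseq (n + N) - mseq n) / εz) atTop (𝓝 0) := by
        simpa using hup.div_const εz
      exact squeeze_zero h0 hb hg0
    have := hsq.add hmlim
    simpa using this
  -- M = m
  have hMm : M = m := by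
    by_cases hAuniv : A = Set.univ
    · have hall : Filter.Tendsto Mseq atTop (𝓝 m) := by
        have := tendsto_sup' (s := Finset.univ) Finset.univ_nonempty
          (F := fun n => (conjOp S)^[n] g)
          (fun z _ => claim1 z (by rw [hAuniv]; exact Set.mem_univ z))
        exact this
      exact tendsto_nhds_unique hMlim hall
    · have hAc : (Aᶜ : Set X).Nonempty := Set.nonempty_compl.mpr hAuniv
      have hch : ∀ x : X, ∃ k : ℕ, x ∉ A → 0 < S^[k + 1] (ind A) x := by
        intro x
        by_cases hx : x ∈ A
        · exact ⟨0, fun h => absurd hx h⟩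
        · obtain ⟨k, hk⟩ := habs x hx
          exact ⟨k, fun _ => hk⟩
      choose kfun hkfun using hch
      set Afin := (Set.toFinite A).toFinset with hAfin
      have hAfinne : Afin.Nonempty := by
        rw [hAfin, Set.Finite.toFinset_nonempty]; exact hAne
      set aseq := fun n => Afin.sup' hAfinne ((conjOp S)^[n] g) with haseq
      have ha_lim : Filter.Tendsto aseq atTop (𝓝 m) :=
        tendsto_sup' hAfinne (fun z hz =>
          claim1 z ((Set.Finite.mem_toFinset _).1 hz))
      have ha_le_b : ∀ n, aseq n ≤ Mseq n := fun n =>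
        Finset.sup'_le _ _ (fun z _ => le_maxf _ z)
      set Acfin := (Set.toFinite (Aᶜ : Set X)).toFinset with hAcfin
      have hAcfinne : Acfin.Nonempty := by
        rw [hAcfin, Set.Finite.toFinset_nonempty]; exact hAc
      set δ := Acfin.inf' hAcfinne (fun x => S^[kfun x + 1] (ind A) x) with hδ
      have hδpos : 0 < δ := by
        rw [hδ, Finset.lt_inf'_iff]
        intro x hx
        have hx' : x ∈ (Aᶜ : Set X) := (Set.Finite.mem_toFinset _).1 hx
        exact hkfun x hx'
      have hδle1 : δ ≤ 1 := by
        obtain ⟨x0, hx0⟩ := hAcfinne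
        calc δ ≤ S^[kfun x0 + 1] (ind A) x0 := Finset.inf'_le _ hx0
        _ ≤ maxf (ind A) := Sn_le_maxf hS _ _ x0
        _ ≤ 1 := maxf_le (ind_le_one A)
      have key2 : ∀ x ∈ (Aᶜ : Set X), ∀ n, (conjOp S)^[n + (kfun x + 1)] g x
          ≤ Mseq n - δ * (Mseq n - aseq n) := by
        intro x hx n
        set p := kfun x + 1 with hp
        set δx := S^[p] (ind A) x with hδx
        have hδxδ : δ ≤ δx := Finset.inf'_le _ ((Set.Finite.mem_toFinset _).2 hx)
        have hδx1 : δx ≤ 1 :=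
          le_trans (Sn_le_maxf hS _ _ x) (maxf_le (ind_le_one A))
        have hMa : 0 ≤ Mseq n - aseq n := by linarith [ha_le_b n]
        have hpt : (conjOp S)^[n] g
            ≤ (Mseq n - aseq n) • ind Aᶜ + fun _ => aseq n := by
          intro y
          by_cases hy : y ∈ A
          · have hyc : y ∉ (Aᶜ : Set X) := by simpa using hy
            have h1 : (conjOp S)^[n] g y ≤ aseq n :=
              Finset.le_sup' _ ((Set.Finite.mem_toFinset _).2 hy)
            simp only [Pi.add_apply, Pi.smul_apply, smul_eq_mul, ind_notmem hyc]
            linarith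
          · have hyc : y ∈ (Aᶜ : Set X) := hy
            have h1 : (conjOp S)^[n] g y ≤ Mseq n := le_maxf _ y
            simp only [Pi.add_apply, Pi.smul_apply, smul_eq_mul, ind_mem hyc]
            linarith
        have hmono2 := Un_mono hS p hpt
        have hhomog : (conjOp S)^[p] ((Mseq n - aseq n) • ind Aᶜ + fun _ => aseq n)
            = (Mseq n - aseq n) • (conjOp S)^[p] (ind Aᶜ) + fun _ => aseq n := by
          rw [Un_shift hS, Un_homog hS p hMa]
        have hdual : (conjOp S)^[p] (ind Aᶜ) x = 1 - S^[p] (ind A) x := by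
          have h1 := Un_dual hS p (ind A)
          rw [ind_compl A]
          have h2 : (fun _ : X => (1:ℝ)) - ind A = (fun _ => 1) - ind A := rfl
          rw [h2, h1]
          simp
        have hit : (conjOp S)^[n + p] g = (conjOp S)^[p] ((conjOp S)^[n] g) := by
          rw [Nat.add_comm, Function.iterate_add_apply]
        have h1 : (conjOp S)^[n + p] g x
            ≤ (Mseq n - aseq n) * ((conjOp S)^[p] (ind Aᶜ) x) + aseq n := by
          rw [hit]
          refine le_trans (hmono2 x) ?_
          rw [hhomog]
          simp
        rw [hdual] at h1
        have hprod : (Mseq n - aseq n) * δ ≤ (Mseq n - aseq n) * δx :=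
          mul_le_mul_of_nonneg_left hδxδ hMa
        rw [← hδx] at h1
        nlinarith
      -- contradiction if M > m
      by_contra hne
      have hMgt : m < M := lt_of_le_of_ne hmM' (fun h => hne h.symm)
      set ε := δ * (M - m) / 4 with hε
      have hεpos : 0 < ε := by
        apply div_pos (mul_pos hδpos (by linarith)); norm_num
      have hev1 : ∀ᶠ n in atTop, aseq n < m + ε :=
        ha_lim.eventually (gt_mem_nhds (by linarith))
      have hev2 : ∀ᶠ n in atTop, Mseq n < M + ε :=
        hMlim.eventually (gt_mem_nhds (by linarith))
      obtain ⟨n0, hn0⟩ := Filter.eventually_atTop.1 (hev1.and hev2)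
      set P := Finset.univ.sup (fun x => kfun x + 1) with hP
      have hall : ∀ n, n0 + P ≤ n → ∀ y, (conjOp S)^[n] g y
          ≤ M + ε - δ * (M - m) := by
        intro n hn y
        by_cases hy : y ∈ A
        · have h1 : (conjOp S)^[n] g y ≤ aseq n :=
            Finset.le_sup' _ ((Set.Finite.mem_toFinset _).2 hy)
          have h2 := (hn0 n (le_trans (Nat.le_add_right n0 P) hn)).1
          have hδM : δ * (M - m) ≤ M - m := by nlinarith
          linarith
        · set p := kfun y + 1 with hp
          have hpP : p ≤ P := Finset.le_sup (f := fun x => kfun x + 1) (Finset.mem_univ y)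
          have hn' : p ≤ n := le_trans hpP (le_trans (Nat.le_add_left P n0) hn)
          obtain ⟨n', rfl⟩ : ∃ n', n = n' + p := ⟨n - p, (Nat.sub_add_cancel hn').symm⟩
          have hn'0 : n0 ≤ n' := by omega
          have hk2 := key2 y hy n'
          have hb := (hn0 n' hn'0).2
          have ha := (hn0 n' hn'0).1
          -- (1-δ) Mseq n' + δ aseq n' ≤ (1-δ)(M+ε) + δ(m+ε)
          have e1 : (1 - δ) * Mseq n' ≤ (1 - δ) * (M + ε) :=
            mul_le_mul_of_nonneg_left hb.le (by linarith)
          have e2 : δ * aseq n' ≤ δ * (m + ε) :=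
            mul_le_mul_of_nonneg_left ha.le hδpos.le
          nlinarith
      obtain ⟨y0, hy0⟩ := exists_maxf ((conjOp S)^[n0 + P] g)
      have hMle : M ≤ (conjOp S)^[n0 + P] g y0 := by
        rw [← hy0]; exact hMn_ge (n0 + P)
      have hfin := hall (n0 + P) (le_refl _) y0
      have hc : 0 < δ * (M - m) := mul_pos hδpos (by linarith)
      linarith
  refine ⟨m, ?_⟩
  rw [tendsto_pi_nhds]
  intro x
  exact tendsto_of_tendsto_of_tendsto_of_le_of_le hmlim (hMm ▸ hMlim)
    (fun n => minf_le _ x) (fun n => le_maxf _ x)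

/-! ### Necessity: an ergodic operator is regularly absorbing -/

theorem regAbs_of_ergodicT (hS : LTOpkg S) (herg : ErgodicT S) : RegAbs S := by
  classical
  have hconj : ∀ h : X → ℝ, ∃ c : ℝ,
      Filter.Tendsto (fun n => (conjOp S)^[n] h) atTop (𝓝 (fun _ => c)) := by
    intro h
    obtain ⟨c, hc⟩ := herg (-h)
    refine ⟨-c, ?_⟩
    have h2 : Filter.Tendsto (fun n => -(S^[n] (-h))) atTop
        (𝓝 (-(fun _ : X => c))) := hc.neg
    have h3 : (-(fun _ : X => c) : X → ℝ) = fun _ => -c := by funext y; simp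
    rw [h3] at h2
    exact h2.congr (fun n => (Un_neg n h).symm)
  have hvanish : ∀ x, x ∉ XRA S →
      Filter.Tendsto (fun n => (conjOp S)^[n] (ind {x})) atTop (𝓝 (fun _ => 0)) := by
    intro x hx
    obtain ⟨c, hc⟩ := hconj (ind {x})
    have hminf : Filter.Tendsto (fun n => minf ((conjOp S)^[n] (ind {x})))
        atTop (𝓝 c) := by
      have := tendsto_minf_comp hc
      rwa [minf_const] at this
    have hzero : ∀ n : ℕ, minf ((conjOp S)^[n+1] (ind {x})) = 0 := by
      intro n
      have h1 : ¬ (0 < minf ((conjOp S)^[n+1] (ind {x}))) := by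
        intro hpos; exact hx ⟨n, hpos⟩
      have h2 : 0 ≤ minf ((conjOp S)^[n+1] (ind {x})) :=
        le_minf (fun y => Un_nonneg hS (n+1) (ind_nonneg {x}) y)
      exact le_antisymm (not_lt.1 h1) h2
    have hcz : c = 0 := by
      have hshift : Filter.Tendsto (fun n => minf ((conjOp S)^[n+1] (ind {x})))
          atTop (𝓝 c) := hminf.comp (tendsto_add_atTop_nat 1)
      have hzz : Filter.Tendsto (fun _ : ℕ => (0:ℝ)) atTop (𝓝 c) :=
        hshift.congr hzero
      exact tendsto_nhds_unique hzz tendsto_const_nhds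
    rwa [hcz] at hc
  constructor
  · by_contra hempty
    rw [Set.not_nonempty_iff_eq_empty] at hempty
    obtain ⟨y0⟩ := (inferInstance : Nonempty X)
    have hone : (fun _ : X => (1:ℝ)) = ∑ x : X, ind {x} := by
      have h1 := eq_sum_ind (fun _ : X => (1:ℝ))
      simpa using h1
    have hge : ∀ n : ℕ, (1:ℝ) ≤ ∑ x : X, (conjOp S)^[n] (ind {x}) y0 := by
      intro n
      have h1 : (conjOp S)^[n] (fun _ : X => (1:ℝ)) y0 = 1 := by rw [Un_const hS]
      have h2 : (conjOp S)^[n] (fun _ : X => (1:ℝ))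
          ≤ ∑ x : X, (conjOp S)^[n] (ind {x}) := by
        conv_lhs => rw [hone]
        exact Un_sum_le hS n _ _
      have h3 := h2 y0
      rw [h1, Finset.sum_apply] at h3
      exact h3
    have hlim : Filter.Tendsto (fun n => ∑ x : X, (conjOp S)^[n] (ind {x}) y0)
        atTop (𝓝 0) := by
      have hsum : Filter.Tendsto (fun n => ∑ x : X, (conjOp S)^[n] (ind {x}) y0)
          atTop (𝓝 (∑ _x : X, (0:ℝ))) := by
        apply tendsto_finset_sum
        intro x _
        have hx : x ∉ XRA S := by rw [hempty]; exact Set.notMem_empty x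
        have hpt := (tendsto_pi_nhds.1 (hvanish x hx)) y0
        simpa using hpt
      simpa using hsum
    have := ge_of_tendsto hlim (Filter.Eventually.of_forall hge)
    linarith
  · intro x0 hx0
    by_contra hno
    push_neg at hno
    set A := XRA S with hA
    have hzero : ∀ n : ℕ, S^[n+1] (ind A) x0 = 0 := fun n =>
      le_antisymm (hno n) (Sn_nonneg hS (n+1) (ind_nonneg A) x0)
    have hone : ∀ n : ℕ, (conjOp S)^[n+1] (ind (Aᶜ : Set X)) x0 = 1 := by
      intro n
      have h1 := Un_dual hS (n+1) (ind A)
      have h2 : ind (Aᶜ : Set X) = (fun _ : X => 1) - ind A := ind_compl A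
      rw [h2, h1, Pi.sub_apply, hzero n]
      norm_num
    have hub : ∀ n : ℕ, (conjOp S)^[n] (ind (Aᶜ : Set X)) x0
        ≤ ∑ x : X, ind (Aᶜ : Set X) x * (conjOp S)^[n] (ind {x}) x0 := by
      intro n
      have hdec := eq_sum_ind (ind (Aᶜ : Set X))
      have h1 : (conjOp S)^[n] (ind (Aᶜ : Set X))
          ≤ ∑ x : X, (conjOp S)^[n] (ind (Aᶜ : Set X) x • ind {x}) := by
        conv_lhs => rw [hdec]
        exact Un_sum_le hS n _ _
      have h2 := h1 x0
      rw [Finset.sum_apply] at h2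
      refine le_trans h2 (le_of_eq (Finset.sum_congr rfl fun x _ => ?_))
      rw [Un_homog hS n (ind_nonneg (Aᶜ : Set X) x), Pi.smul_apply, smul_eq_mul]
    have hlim0 : Filter.Tendsto
        (fun n => ∑ x : X, ind (Aᶜ : Set X) x * (conjOp S)^[n] (ind {x}) x0)
        atTop (𝓝 0) := by
      have hsum : Filter.Tendsto
          (fun n => ∑ x : X, ind (Aᶜ : Set X) x * (conjOp S)^[n] (ind {x}) x0)
          atTop (𝓝 (∑ _x : X, (0:ℝ))) := by
        apply tendsto_finset_sum
        intro x _
        by_cases hxA : x ∈ A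
        · have hz : ind (Aᶜ : Set X) x = 0 := ind_notmem (by simpa using hxA)
          simp [hz]
        · have hxn : x ∉ XRA S := hxA
          have hpt := (tendsto_pi_nhds.1 (hvanish x hxn)) x0
          have hmul := hpt.const_mul (ind (Aᶜ : Set X) x)
          simpa using hmul
      simpa using hsum
    have hge1 : ∀ᶠ n in atTop,
        (1:ℝ) ≤ ∑ x : X, ind (Aᶜ : Set X) x * (conjOp S)^[n] (ind {x}) x0 := by
      rw [Filter.eventually_atTop]
      refine ⟨1, fun n hn => ?_⟩
      obtain ⟨k, rfl⟩ : ∃ k, n = k + 1 := ⟨n - 1, by omega⟩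
      calc (1:ℝ) = (conjOp S)^[k+1] (ind (Aᶜ : Set X)) x0 := (hone k).symm
      _ ≤ _ := hub (k+1)
    have := ge_of_tendsto hlim0 hge1
    linarith

end Aux

/-- For any `t > 0`, `Q` is ergodic iff `T_t` is regularly absorbing. -/
theorem stmt5 {X : Type*} [Fintype X] [Nonempty X]
    (Q : (X → ℝ) → (X → ℝ)) (hQ : IsLTRO Q)
    (T : ℝ → (X → ℝ) → (X → ℝ)) (hT : IsSol Q T)
    (t : ℝ) (ht : 0 < t) :
    ErgodicQ T ↔ RegAbs (T t) := by
  have ht0 : (0:ℝ) ≤ t := ht.le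
  have hS : LTOpkg (T t) := T_pkg hQ hT ht0
  constructor
  · intro herg
    apply regAbs_of_ergodicT hS
    intro f
    obtain ⟨c, hc⟩ := herg f
    refine ⟨c, ?_⟩
    have hnat : Filter.Tendsto (fun n : ℕ => (n : ℝ) * t) atTop atTop :=
      tendsto_natCast_atTop_atTop.atTop_mul_const ht
    have hcomp := hc.comp hnat
    exact hcomp.congr (fun n => (T_iterate hQ hT f ht0 n).symm)
  · intro hreg f
    obtain ⟨c, hc⟩ := U_ergodic_of_regAbs hS hreg (-f)
    refine ⟨-c, ?_⟩
    have hSn : Filter.Tendsto (fun n => (T t)^[n] f) atTop (𝓝 (fun _ : X => -c)) := by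
      have h2 := hc.neg
      have h3 : (-(fun _ : X => c) : X → ℝ) = fun _ => -c := by funext y; simp
      rw [h3] at h2
      refine h2.congr (fun n => ?_)
      have h4 := Un_neg (S := T t) n (-f)
      rw [h4, neg_neg, neg_neg]
    have hmin : Filter.Tendsto (fun n => minf ((T t)^[n] f)) atTop (𝓝 (-c)) := by
      have := tendsto_minf_comp hSn; rwa [minf_const] at this
    have hmax : Filter.Tendsto (fun n => maxf ((T t)^[n] f)) atTop (𝓝 (-c)) := by
      have := tendsto_maxf_comp hSn; rwa [maxf_const] at this
    rw [tendsto_pi_nhds]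
    intro x
    rw [Metric.tendsto_nhds]
    intro ε hε
    obtain ⟨N, hN⟩ := Filter.eventually_atTop.1
      ((hmin.eventually (lt_mem_nhds (show -c - ε < -c by linarith))).and
        (hmax.eventually (gt_mem_nhds (show -c < -c + ε by linarith))))
    rw [Filter.eventually_atTop]
    refine ⟨(N : ℝ) * t, fun s hs => ?_⟩
    have hNt0 : (0:ℝ) ≤ (N:ℝ) * t := by positivity
    have hs0 : (0:ℝ) ≤ s := le_trans hNt0 hs
    have hmlow : minf (T ((N:ℝ)*t) f) ≤ minf (T s f) := minf_T_mono hQ hT f hNt0 hs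
    have hmup : maxf (T s f) ≤ maxf (T ((N:ℝ)*t) f) := maxf_T_anti hQ hT f hNt0 hs
    have hiter := T_iterate hQ hT f ht0 N
    have h1 := (hN N (le_refl N)).1
    have h2 := (hN N (le_refl N)).2
    rw [hiter] at h1 h2
    have hxlow : -c - ε < T s f x :=
      lt_of_lt_of_le (lt_of_lt_of_le h1 hmlow) (minf_le _ x)
    have hxup : T s f x < -c + ε :=
      lt_of_le_of_lt (le_trans (le_maxf _ x) hmup) h2
    rw [Real.dist_eq, abs_lt]
    constructor <;> linarith
end

section
/- Let Q be a lower transition rate operator on a finite nonempty set 𝒳, and let (T_t)_{t≥0} be the associated family of operators determined by the differential equation d/dt T_t f = Q(T_t f) with T_0 f = f. Then for every t ≥ 0, T_t is a lower transition operator; that is, for all f, g ∈ 𝓛(𝒳) and all λ ≥ 0: T_t f ≥ min f pointwise, T_t(f+g) ≥ T_t f + T_t g pointwise, and T_t(λf) = λ T_t f. -/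
open Filter Topology

section Aux

open Set Filter Topology

variable {X : Type*} [Fintype X]

/-- At a minimizer of `g`, a lower transition rate operator is nonnegative. -/
lemma key_min {Q : (X → ℝ) → (X → ℝ)} (hQ : IsLTRO Q)
    (g : X → ℝ) (y : X) (hy : ∀ x, g y ≤ g x) : 0 ≤ Q g y := by
  obtain ⟨h0, hadd, hsmul, hpos⟩ := hQ
  set h : X → ℝ := fun x => g x - g y with hh
  have hQ0 : Q (0 : X → ℝ) = 0 := h0 0
  have hsum : ∀ s : Finset X,
      (∑ w ∈ s, h w • Q (ind {w})) ≤ Q (∑ w ∈ s, h w • ind {w}) := by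
    intro s
    induction s using Finset.cons_induction with
    | empty => simp [hQ0]
    | cons a s ha ih =>
      rw [Finset.sum_cons, Finset.sum_cons]
      calc h a • Q (ind {a}) + ∑ w ∈ s, h w • Q (ind {w})
          ≤ h a • Q (ind {a}) + Q (∑ w ∈ s, h w • ind {w}) := add_le_add_right ih _
        _ = Q (h a • ind {a}) + Q (∑ w ∈ s, h w • ind {w}) := by
            rw [hsmul (h a) (sub_nonneg.2 (hy a))]
        _ ≤ Q (h a • ind {a} + ∑ w ∈ s, h w • ind {w}) := hadd _ _
  have hdecomp : (∑ w ∈ Finset.univ, h w • ind ({w} : Set X)) = h := by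
    classical
    funext x
    rw [Finset.sum_apply, Finset.sum_eq_single x]
    · simp [ind]
    · intro w _ hwx
      simp [ind, Set.indicator_apply, Ne.symm hwx]
    · intro hx; exact absurd (Finset.mem_univ x) hx
  have h2 := hsum Finset.univ
  rw [hdecomp] at h2
  have h3 : 0 ≤ (∑ w ∈ Finset.univ, h w • Q (ind ({w} : Set X))) y := by
    rw [Finset.sum_apply]
    apply Finset.sum_nonneg
    intro w _
    by_cases hwy : w = y
    · subst hwy; simp [hh]
    · have hp : 0 ≤ Q (ind ({w} : Set X)) y := hpos y w (Ne.symm hwy)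
      have hnn : 0 ≤ h w := sub_nonneg.2 (hy w)
      simpa [smul_eq_mul] using mul_nonneg hnn hp
  have h4 : Q h y ≤ Q g y := by
    have h5 := hadd h (fun _ => g y)
    have he : h + (fun _ => g y) = g := by funext x; simp [hh]
    rw [he, h0] at h5
    simpa using h5 y
  exact le_trans (h3.trans (h2 y)) h4

lemma Qdiff {Q : (X → ℝ) → (X → ℝ)} (hQ : IsLTRO Q) (a b : X → ℝ) :
    Q (a - b) ≤ Q a - Q b := by
  obtain ⟨h0, hadd, -, -⟩ := hQ
  have h1 := hadd (a - b) b
  rw [sub_add_cancel] at h1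
  intro x
  have := h1 x
  simp only [Pi.add_apply, Pi.sub_apply] at this ⊢
  linarith

/-- If componentwise derivatives are nonnegative at minimizers, the minimum is
nondecreasing on `[0, ∞)`. -/
lemma min_mono [Nonempty X] (v d : ℝ → X → ℝ)
    (hv : ∀ x : X, ∀ t ∈ Set.Ici (0:ℝ),
      HasDerivWithinAt (fun s => v s x) (d t x) (Set.Ici 0) t)
    (hd : ∀ t ∈ Set.Ici (0:ℝ), ∀ y : X, v t y = minf (v t) → 0 ≤ d t y) :
    ∀ t ∈ Set.Ici (0:ℝ), minf (v 0) ≤ minf (v t) := by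
  intro t ht
  have hIcc : Set.Icc (0:ℝ) t ⊆ Set.Ici 0 := fun s hs => hs.1
  set F : ℝ → ℝ := fun s => -minf (v s) with hFdef
  have hcont : ContinuousOn F (Set.Icc 0 t) := by
    apply ContinuousOn.neg
    have hcomp : ∀ x : X, ContinuousOn (fun s => v s x) (Set.Icc 0 t) := fun x s hs =>
      ((hv x s hs.1).continuousWithinAt).mono hIcc
    exact ContinuousOn.finset_inf'_apply Finset.univ_nonempty (fun x _ => hcomp x)
  have bound : ∀ s ∈ Set.Ico (0:ℝ) t, ∀ r, (0:ℝ) < r →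
      ∃ᶠ z in 𝓝[>] s, slope F s z < r := by
    intro s hs r hr
    have hex : ∃ y : X, ∃ᶠ z in 𝓝[>] s, v z y = minf (v z) := by
      by_contra hc
      push_neg at hc
      have hev : ∀ᶠ z in 𝓝[>] s, ∀ y : X, v z y ≠ minf (v z) := by
        rw [Filter.eventually_all]
        intro y
        simpa [Filter.not_frequently] using hc y
      obtain ⟨z, hz⟩ := hev.exists
      obtain ⟨y, -, hy⟩ := Finset.exists_mem_eq_inf' (Finset.univ_nonempty (α := X)) (v z)
      exact hz y hy.symm
    obtain ⟨y, hy⟩ := hex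
    set G : ℝ → ℝ := fun u => -(v u y) with hGdef
    have hminle : minf (v s) ≤ v s y := Finset.inf'_le _ (Finset.mem_univ y)
    have hGs : G s ≤ F s := neg_le_neg hminle
    have hGd : HasDerivWithinAt G (-(d s y)) (Set.Ici 0) s := (hv y s hs.1).neg
    have hmono : (𝓝[>] s) ≤ 𝓝[Set.Ici 0 \ {s}] s := by
      apply nhdsWithin_mono
      intro z hz
      exact ⟨hs.1.trans (le_of_lt hz), by simpa using (ne_of_gt hz)⟩
    have hslopeG : Filter.Tendsto (slope G s) (𝓝[>] s) (𝓝 (-(d s y))) :=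
      (hasDerivWithinAt_iff_tendsto_slope.1 hGd).mono_left hmono
    have hkey : ∀ z, s < z → v z y = minf (v z) →
        slope F s z = slope G s z + (G s - F s) / (z - s) := by
      intro z hz hmz
      have hFz : F z = G z := by simp [hFdef, hGdef, hmz]
      rw [slope_def_field, slope_def_field, hFz, ← add_div]
      ring_nf
    by_cases hmin : v s y = minf (v s)
    · have hds : 0 ≤ d s y := hd s hs.1 y hmin
      have hFG : F s = G s := by simp [hFdef, hGdef, hmin]
      have hev : ∀ᶠ z in 𝓝[>] s, slope G s z < r :=
        hslopeG.eventually_lt_const (by linarith)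
      refine (hy.and_eventually (hev.and eventually_mem_nhdsWithin)).mono ?_
      rintro z ⟨hz1, hz2, hz3⟩
      rw [hkey z hz3 hz1, hFG]
      simpa using hz2
    · have hlt : minf (v s) < v s y := lt_of_le_of_ne hminle (Ne.symm hmin)
      have hcneg : G s - F s < 0 := by
        simp only [hGdef, hFdef]
        linarith
      have hzs : Filter.Tendsto (fun z => z - s) (𝓝[>] s) (𝓝[>] (0:ℝ)) := by
        apply tendsto_nhdsWithin_of_tendsto_nhds_of_eventually_within
        · have h0' : Filter.Tendsto (fun z => z - s) (𝓝 s) (𝓝 (0:ℝ)) := by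
            have h0'' : Filter.Tendsto (fun z : ℝ => z - s) (𝓝 s) (𝓝 (s - s)) :=
              Filter.Tendsto.sub tendsto_id tendsto_const_nhds
            simpa using h0''
          exact h0'.mono_left nhdsWithin_le_nhds
        · exact eventually_mem_nhdsWithin.mono fun z hz => Set.mem_Ioi.2 (sub_pos.2 hz)
      have hinv : Filter.Tendsto (fun z => (z - s)⁻¹) (𝓝[>] s) Filter.atTop :=
        tendsto_inv_nhdsGT_zero.comp hzs
      have hc2 : Filter.Tendsto (fun z => (G s - F s) / (z - s)) (𝓝[>] s) Filter.atBot := by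
        simp only [div_eq_mul_inv]
        exact (tendsto_const_mul_atBot_of_neg hcneg).2 hinv
      have hbd : ∀ᶠ z in 𝓝[>] s, slope G s z ≤ -(d s y) + 1 :=
        (hslopeG.eventually_lt_const (lt_add_one _)).mono fun z hz => le_of_lt hz
      have htend : Filter.Tendsto (fun z => slope G s z + (G s - F s) / (z - s))
          (𝓝[>] s) Filter.atBot :=
        Filter.tendsto_atBot_add_left_of_ge' _ (-(d s y) + 1) hbd hc2
      have hev : ∀ᶠ z in 𝓝[>] s, slope G s z + (G s - F s) / (z - s) < r :=
        htend.eventually_lt_atBot r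
      refine (hy.and_eventually (hev.and eventually_mem_nhdsWithin)).mono ?_
      rintro z ⟨hz1, hz2, hz3⟩
      rw [hkey z hz3 hz1]
      exact hz2
  have hmain : ∀ x ∈ Set.Icc (0:ℝ) t, F x ≤ (fun _ => F 0) x :=
    image_le_of_liminf_slope_right_le_deriv_boundary (B := fun _ => F 0) (B' := fun _ => 0)
      hcont le_rfl continuousOn_const (fun x _ => hasDerivWithinAt_const x _ (F 0)) bound
  have := hmain t ⟨ht, le_rfl⟩
  simp only [hFdef] at this
  linarith

end Aux

/-- For every `t ≥ 0`, `T_t` is a lower transition operator. -/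
theorem stmt7 {X : Type*} [Fintype X] [Nonempty X]
    (Q : (X → ℝ) → (X → ℝ)) (hQ : IsLTRO Q)
    (T : ℝ → (X → ℝ) → (X → ℝ)) (hT : IsSol Q T) :
    ∀ t : ℝ, 0 ≤ t → IsLTO (T t) := by
  classical
  obtain ⟨hT0, hT'⟩ := hT
  obtain ⟨hQ0, hQadd, hQsmul, hQpos⟩ := id hQ
  -- componentwise derivatives
  have heval : ∀ (f : X → ℝ) (x : X) (t : ℝ), 0 ≤ t →
      HasDerivWithinAt (fun s => T s f x) (Q (T t f) x) (Set.Ici 0) t := by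
    intro f x t htt
    have := (ContinuousLinearMap.proj (R := ℝ) (φ := fun _ : X => ℝ)
      x).hasFDerivAt.comp_hasDerivWithinAt t (hT' f t htt)
    exact this
  -- minimizer extraction
  have hminz : ∀ (g : X → ℝ) (y : X), g y = minf g → ∀ x, g y ≤ g x := by
    intro g y hy x
    rw [hy]
    exact Finset.inf'_le _ (Finset.mem_univ x)
  intro t ht
  refine ⟨?_, ?_, ?_⟩
  · -- lower bound by the minimum
    intro f x
    have hm := min_mono (fun s => T s f) (fun s => Q (T s f))
      (fun x s hs => heval f x s hs)
      (fun s hs y hy => key_min hQ (T s f) y (hminz _ y hy)) t ht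
    simp only [hT0] at hm
    exact le_trans hm (Finset.inf'_le _ (Finset.mem_univ x))
  · -- superadditivity
    intro f g
    set v : ℝ → X → ℝ := fun s => T s (f + g) - T s f - T s g with hvdef
    set d : ℝ → X → ℝ := fun s => Q (T s (f + g)) - Q (T s f) - Q (T s g) with hddef
    have hv : ∀ x : X, ∀ s ∈ Set.Ici (0:ℝ),
        HasDerivWithinAt (fun u => v u x) (d s x) (Set.Ici 0) s := by
      intro x s hs
      exact ((heval (f + g) x s hs).sub (heval f x s hs)).sub (heval g x s hs)
    have hd : ∀ s ∈ Set.Ici (0:ℝ), ∀ y : X, v s y = minf (v s) → 0 ≤ d s y := by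
      intro s hs y hy
      have hk : 0 ≤ Q (v s) y := key_min hQ (v s) y (hminz _ y hy)
      have h1 : Q (v s) y ≤ (Q (T s (f + g) - T s f) - Q (T s g)) y :=
        Qdiff hQ (T s (f + g) - T s f) (T s g) y
      have h2 : Q (T s (f + g) - T s f) y ≤ (Q (T s (f + g)) - Q (T s f)) y :=
        Qdiff hQ (T s (f + g)) (T s f) y
      simp only [Pi.sub_apply] at h1 h2 ⊢
      simp only [hddef, Pi.sub_apply]
      linarith
    have hm := min_mono v d hv hd t ht
    have hv0 : v 0 = 0 := by
      simp only [hvdef, hT0]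
      funext x
      simp
    rw [hv0] at hm
    have hm0 : (0:ℝ) ≤ minf (v t) := by
      have : minf (0 : X → ℝ) = 0 := by
        simp [minf]
      linarith [hm, this]
    intro x
    have := le_trans hm0 (Finset.inf'_le (v t) (Finset.mem_univ x))
    simp only [hvdef, Pi.sub_apply] at this
    simp only [Pi.add_apply]
    linarith
  · -- nonnegative homogeneity
    intro l hl f
    set u1 : ℝ → X → ℝ := fun s => T s (l • f) with hu1
    set u2 : ℝ → X → ℝ := fun s => l • T s f with hu2
    have hd2 : ∀ x : X, ∀ s ∈ Set.Ici (0:ℝ),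
        HasDerivWithinAt (fun u => u2 u x) (Q (u2 s) x) (Set.Ici 0) s := by
      intro x s hs
      have h1 : HasDerivWithinAt (fun u => l * T u f x) (l * Q (T s f) x) (Set.Ici 0) s :=
        (heval f x s hs).const_mul l
      have h2 : Q (u2 s) x = l * Q (T s f) x := by
        rw [hu2, hQsmul l hl]
        simp
      rw [h2]
      simpa [hu2] using h1
    have hd1 : ∀ x : X, ∀ s ∈ Set.Ici (0:ℝ),
        HasDerivWithinAt (fun u => u1 u x) (Q (u1 s) x) (Set.Ici 0) s := by
      intro x s hs
      exact heval (l • f) x s hs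
    have hgen : ∀ (a b : ℝ → X → ℝ),
        (∀ x : X, ∀ s ∈ Set.Ici (0:ℝ),
          HasDerivWithinAt (fun u => a u x) (Q (a s) x) (Set.Ici 0) s) →
        (∀ x : X, ∀ s ∈ Set.Ici (0:ℝ),
          HasDerivWithinAt (fun u => b u x) (Q (b s) x) (Set.Ici 0) s) →
        ∀ s ∈ Set.Ici (0:ℝ), minf (a 0 - b 0) ≤ minf (a s - b s) := by
      intro a b ha hb
      have hm := min_mono (fun s => a s - b s) (fun s => Q (a s) - Q (b s))
        (fun x s hs => by
          have := (ha x s hs).sub (hb x s hs)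
          exact this)
        (fun s hs y hy => by
          have hk : 0 ≤ Q (a s - b s) y := key_min hQ (a s - b s) y (hminz _ y hy)
          have h1 : Q (a s - b s) y ≤ (Q (a s) - Q (b s)) y := Qdiff hQ (a s) (b s) y
          simp only [Pi.sub_apply] at h1 ⊢
          linarith)
      exact hm
    have h00 : u1 0 = u2 0 := by
      simp [hu1, hu2, hT0]
    have e1 := hgen u1 u2 hd1 hd2 t ht
    have e2 := hgen u2 u1 hd2 hd1 t ht
    rw [h00] at e1 e2
    have hz : minf (u2 0 - u2 0) = 0 := by
      simp [minf]
    rw [hz] at e1 e2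
    funext x
    have p1 := le_trans e1 (Finset.inf'_le (u1 t - u2 t) (Finset.mem_univ x))
    have p2 := le_trans e2 (Finset.inf'_le (u2 t - u1 t) (Finset.mem_univ x))
    simp only [Pi.sub_apply] at p1 p2
    have : u1 t x = u2 t x := le_antisymm (by linarith) (by linarith)
    simpa [hu1, hu2] using this
end

section
/- Let Q be a lower transition rate operator on a finite nonempty set 𝒳, and let (T_t)_{t≥0} be the associated family of operators determined by the differential equation d/dt T_t f = Q(T_t f) with T_0 f = f. Then T_0 is the identity map, and for every t ≥ 0 the derivative d/dt T_t = Q T_t holds with respect to the operator norm; that is, for every ε > 0 there exists δ > 0 such that for all s ≥ 0 with 0 < |s − t| < δ and all f ∈ 𝓛(𝒳) with ‖f‖ = 1, one has ‖(T_s f − T_t f)/(s − t) − Q(T_t f)‖ < ε. -/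
open Filter Topology

lemma Qzero' {X : Type*} [Fintype X] (Q : (X → ℝ) → (X → ℝ)) (hQ : IsLTRO Q) :
    Q 0 = 0 := by
  have := hQ.1 0
  convert this using 2
  rfl

lemma Qsum' {X : Type*} [Fintype X] (Q : (X → ℝ) → (X → ℝ)) (hQ : IsLTRO Q)
    {ι : Type*} (s : Finset ι) (h : ι → X → ℝ) :
    ∑ i ∈ s, Q (h i) ≤ Q (∑ i ∈ s, h i) := by
  classical
  induction s using Finset.induction_on with
  | empty => simp [Qzero' Q hQ]
  | insert _ _ hx ih =>
      rw [Finset.sum_insert hx, Finset.sum_insert hx]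
      exact le_trans (add_le_add (le_refl _) ih) (hQ.2.1 _ _)

lemma decomp' {X : Type*} [Fintype X] (g : X → ℝ) :
    ∑ y : X, g y • ind ({y} : Set X) = g := by
  classical
  funext x
  simp only [Finset.sum_apply, Pi.smul_apply, ind, Set.indicator_apply,
    Set.mem_singleton_iff, smul_eq_mul, Pi.one_apply, mul_ite, mul_one, mul_zero]
  rw [Finset.sum_ite_eq]
  simp

lemma Qtrans' {X : Type*} [Fintype X] (Q : (X → ℝ) → (X → ℝ)) (hQ : IsLTRO Q)
    (f : X → ℝ) (c : ℝ) : Q (f + fun _ => c) = Q f := by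
  have h1 : Q f + Q (fun _ => c) ≤ Q (f + fun _ => c) := hQ.2.1 f _
  have h2 : Q (f + fun _ => c) + Q (fun _ => -c) ≤ Q ((f + fun _ => c) + fun _ => -c) :=
    hQ.2.1 _ _
  rw [hQ.1 c] at h1
  rw [hQ.1 (-c)] at h2
  have he : ((f + fun _ => c) + fun _ => (-c)) = f := by funext x; simp
  rw [he] at h2
  simp only [add_zero] at h1 h2
  exact le_antisymm h2 h1

lemma qlip' {X : Type*} [Fintype X] [Nonempty X] (Q : (X → ℝ) → (X → ℝ)) (hQ : IsLTRO Q) :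
    ∃ K : ℝ, 0 ≤ K ∧ (∀ f, ‖Q f‖ ≤ K * ‖f‖) ∧ ∀ f g, ‖Q f - Q g‖ ≤ K * ‖f - g‖ := by
  classical
  set M : ℝ := Finset.univ.sup' Finset.univ_nonempty (fun x : X => |Q (ind {x}) x|) with hM
  have hM0 : 0 ≤ M := by
    have := Finset.le_sup' (fun x : X => |Q (ind {x}) x|) (Finset.mem_univ (Classical.arbitrary X))
    exact le_trans (abs_nonneg _) this
  refine ⟨2 * M, by linarith, ?_⟩
  -- core lower bound
  have core : ∀ (h : X → ℝ) (x : X), -(2 * M * ‖h‖) ≤ Q h x := by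
    intro h x
    set c := ‖h‖ with hc
    have hc0 : 0 ≤ c := norm_nonneg _
    set g : X → ℝ := h + fun _ => c with hg
    have hg0 : ∀ y, 0 ≤ g y := by
      intro y
      have : |h y| ≤ c := by rw [← Real.norm_eq_abs]; exact norm_le_pi_norm h y
      have := (abs_le.mp this).1
      simp [hg]; linarith
    have hg2 : ∀ y, g y ≤ 2 * c := by
      intro y
      have : |h y| ≤ c := by rw [← Real.norm_eq_abs]; exact norm_le_pi_norm h y
      have := (abs_le.mp this).2
      simp [hg]; linarith
    have hdec : ∑ y : X, Q (g y • ind ({y} : Set X)) ≤ Q g := by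
      have := Qsum' Q hQ Finset.univ (fun y => g y • ind ({y} : Set X))
      rwa [decomp'] at this
    have hhom : ∀ y, Q (g y • ind ({y} : Set X)) = g y • Q (ind ({y} : Set X)) :=
      fun y => hQ.2.2.1 _ (hg0 y) _
    have hQh : Q h x = Q g x := by rw [hg, Qtrans' Q hQ]
    have hsumle : ∑ y : X, g y * Q (ind ({y} : Set X)) x ≤ Q g x := by
      have := hdec x
      simp only [Finset.sum_apply] at this
      calc ∑ y : X, g y * Q (ind ({y} : Set X)) x
          = ∑ y : X, Q (g y • ind ({y} : Set X)) x := by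
            refine Finset.sum_congr rfl fun y _ => ?_
            rw [hhom y]; simp
        _ ≤ Q g x := this
    have hsplit : g x * Q (ind ({x} : Set X)) x +
        ∑ y ∈ Finset.univ.erase x, g y * Q (ind ({y} : Set X)) x
        = ∑ y : X, g y * Q (ind ({y} : Set X)) x :=
      Finset.add_sum_erase Finset.univ (fun y => g y * Q (ind ({y} : Set X)) x)
        (Finset.mem_univ x)
    have hrest : 0 ≤ ∑ y ∈ Finset.univ.erase x, g y * Q (ind ({y} : Set X)) x := by
      refine Finset.sum_nonneg fun y hy => ?_
      exact mul_nonneg (hg0 y) (hQ.2.2.2 x y (Finset.ne_of_mem_erase hy).symm)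
    have hq : |Q (ind ({x} : Set X)) x| ≤ M :=
      Finset.le_sup' (fun x : X => |Q (ind {x}) x|) (Finset.mem_univ x)
    have hql := (abs_le.mp hq).1
    have hmain : -(2 * M * c) ≤ g x * Q (ind ({x} : Set X)) x := by
      nlinarith [mul_nonneg (hg0 x) (by linarith : (0:ℝ) ≤ Q (ind ({x} : Set X)) x + M),
        mul_nonneg (by linarith [hg2 x] : (0:ℝ) ≤ 2 * c - g x) hM0]
    rw [hQh]
    calc -(2 * M * c) ≤ g x * Q (ind ({x} : Set X)) x := hmain
      _ ≤ ∑ y : X, g y * Q (ind ({y} : Set X)) x := by rw [← hsplit]; linarith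
      _ ≤ Q g x := hsumle
  have upper : ∀ (h : X → ℝ) (x : X), Q h x ≤ 2 * M * ‖h‖ := by
    intro h x
    have hadd := hQ.2.1 h (-h) x
    have hzero : h + -h = (0 : X → ℝ) := by funext y; simp
    rw [hzero, Qzero' Q hQ] at hadd
    have h2 := core (-h) x
    rw [norm_neg] at h2
    simp only [Pi.add_apply, Pi.zero_apply] at hadd
    linarith
  have bound : ∀ h : X → ℝ, ‖Q h‖ ≤ 2 * M * ‖h‖ := by
    intro h
    rw [pi_norm_le_iff_of_nonneg (by positivity)]
    intro x
    rw [Real.norm_eq_abs, abs_le]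
    exact ⟨core h x, upper h x⟩
  refine ⟨bound, fun f g => ?_⟩
  rw [pi_norm_le_iff_of_nonneg (by positivity)]
  intro x
  rw [Real.norm_eq_abs, abs_le]
  constructor
  · have := hQ.2.1 g (f - g) x
    have he : g + (f - g) = f := by funext y; simp
    rw [he] at this
    simp only [Pi.add_apply, Pi.sub_apply] at this ⊢
    have := core (f - g) x
    have h3 := hQ.2.1 g (f - g) x
    rw [he] at h3
    simp only [Pi.add_apply] at h3
    linarith
  · have h3 := hQ.2.1 f (g - f) x
    have he : f + (g - f) = g := by funext y; simp
    rw [he] at h3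
    simp only [Pi.add_apply] at h3
    have h4 := core (g - f) x
    rw [norm_sub_rev] at h4
    simp only [Pi.sub_apply] at h4 ⊢
    linarith

/-- `T_0 = I` and `d/dt T_t = Q T_t` with respect to the operator norm. -/
theorem stmt8 {X : Type*} [Fintype X] [Nonempty X]
    (Q : (X → ℝ) → (X → ℝ)) (hQ : IsLTRO Q)
    (T : ℝ → (X → ℝ) → (X → ℝ)) (hT : IsSol Q T) :
    (∀ f : X → ℝ, T 0 f = f) ∧
      ∀ t : ℝ, 0 ≤ t → ∀ ε : ℝ, 0 < ε → ∃ δ : ℝ, 0 < δ ∧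
        ∀ s : ℝ, 0 ≤ s → 0 < |s - t| → |s - t| < δ →
          ∀ f : X → ℝ, ‖f‖ = 1 →
            ‖(s - t)⁻¹ • (T s f - T t f) - Q (T t f)‖ < ε := by
  obtain ⟨K, hK0, hKb, hKl⟩ := qlip' Q hQ
  refine ⟨hT.1, ?_⟩
  intro t ht ε hε
  set B : ℝ := Real.exp (K * (t + 1)) with hBdef
  have hB0 : 0 < B := Real.exp_pos _
  set C : ℝ := K * (K * B) with hCdef
  have hC0 : 0 ≤ C := by positivity
  refine ⟨min 1 (ε / (C + 1)), lt_min one_pos (by positivity), ?_⟩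
  intro s hs hst hstδ f hf
  have hst1 : |s - t| < 1 := lt_of_lt_of_le hstδ (min_le_left _ _)
  have hstε : |s - t| < ε / (C + 1) := lt_of_lt_of_le hstδ (min_le_right _ _)
  -- a priori bound on ‖T r f‖ on [0, t+1]
  have apriori : ∀ r ∈ Set.Icc (0:ℝ) (t + 1), ‖T r f‖ ≤ B := by
    have hcont : ContinuousOn (fun r => T r f) (Set.Icc 0 (t + 1)) := fun r hr =>
      ((hT.2 f r hr.1).continuousWithinAt).mono (fun x hx => hx.1)
    have hderiv : ∀ r ∈ Set.Ico (0:ℝ) (t + 1),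
        HasDerivWithinAt (fun u => T u f) (Q (T r f)) (Set.Ici r) r := fun r hr =>
      (hT.2 f r hr.1).mono (Set.Ici_subset_Ici.mpr hr.1)
    have h0 : ‖T 0 f‖ ≤ 1 := by rw [hT.1 f, hf]
    have hbd : ∀ r ∈ Set.Ico (0:ℝ) (t + 1), ‖Q (T r f)‖ ≤ K * ‖T r f‖ + 0 := by
      intro r _; simpa using hKb (T r f)
    intro r hr
    have := norm_le_gronwallBound_of_norm_deriv_right_le hcont hderiv h0 hbd r hr
    rw [gronwallBound_ε0] at this
    calc ‖T r f‖ ≤ 1 * Real.exp (K * (r - 0)) := this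
      _ ≤ B := by
          rw [one_mul, hBdef]
          exact Real.exp_le_exp.mpr (by nlinarith [hr.2])
  set a : ℝ := min s t with hadef
  set b : ℝ := max s t with hbdef
  have h0a : (0:ℝ) ≤ a := le_min hs ht
  have hba : b - a = |s - t| := by rw [abs_sub_comm]; exact max_sub_min_eq_abs s t
  have hb1 : b ≤ t + 1 := by
    rw [hbdef]
    rcases abs_lt.mp hst1 with ⟨_, h2⟩
    exact max_le (by linarith) (by linarith)
  have hsubIcc : Set.Icc a b ⊆ Set.Icc (0:ℝ) (t + 1) := fun r hr =>
    ⟨le_trans h0a hr.1, le_trans hr.2 hb1⟩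
  have hsubIci : Set.Icc a b ⊆ Set.Ici (0:ℝ) := fun r hr => le_trans h0a hr.1
  have hsmem : s ∈ Set.Icc a b := ⟨min_le_left _ _, le_max_left _ _⟩
  have htmem : t ∈ Set.Icc a b := ⟨min_le_right _ _, le_max_right _ _⟩
  have derivS : ∀ r ∈ Set.Icc a b,
      HasDerivWithinAt (fun u => T u f) (Q (T r f)) (Set.Icc a b) r := fun r hr =>
    (hT.2 f r (hsubIci hr)).mono hsubIci
  -- Lipschitz-in-time bound
  have step1 : ∀ r ∈ Set.Icc a b, ‖T r f - T t f‖ ≤ (K * B) * |s - t| := by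
    intro r hr
    have := Convex.norm_image_sub_le_of_norm_hasDerivWithin_le derivS
      (fun u hu => le_trans (hKb (T u f))
        (mul_le_mul_of_nonneg_left (apriori u (hsubIcc hu)) hK0))
      (convex_Icc a b) htmem hr
    have habs : ‖r - t‖ ≤ |s - t| := by
      rw [Real.norm_eq_abs, ← hba, abs_le]
      constructor <;> [linarith [hr.1, htmem.2]; linarith [hr.2, htmem.1]]
    calc ‖T r f - T t f‖ ≤ (K * B) * ‖r - t‖ := this
      _ ≤ (K * B) * |s - t| := by
          exact mul_le_mul_of_nonneg_left habs (by positivity)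
  -- second-order estimate
  set c : X → ℝ := Q (T t f) with hcdef
  have derivH : ∀ r ∈ Set.Icc a b,
      HasDerivWithinAt (fun u => T u f - (u - t) • c) (Q (T r f) - c) (Set.Icc a b) r := by
    intro r hr
    have h2 : HasDerivAt (fun u : ℝ => (u - t) • c) ((1:ℝ) • c) r :=
      ((hasDerivAt_id r).sub_const t).smul_const c
    have := (derivS r hr).sub (h2.hasDerivWithinAt)
    rw [one_smul] at this
    exact this
  have step2 : ‖(T s f - (s - t) • c) - (T t f - (t - t) • c)‖ ≤ (C * |s - t|) * ‖s - t‖ := by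
    refine Convex.norm_image_sub_le_of_norm_hasDerivWithin_le derivH ?_
      (convex_Icc a b) htmem hsmem
    intro r hr
    calc ‖Q (T r f) - c‖ ≤ K * ‖T r f - T t f‖ := hKl _ _
      _ ≤ K * ((K * B) * |s - t|) := mul_le_mul_of_nonneg_left (step1 r hr) hK0
      _ = C * |s - t| := by ring
  have hne : s - t ≠ 0 := by
    intro h; rw [h] at hst; simp at hst
  have key : ‖(s - t)⁻¹ • (T s f - T t f) - c‖ ≤ C * |s - t| := by
    have heq : (s - t)⁻¹ • (T s f - T t f) - c
        = (s - t)⁻¹ • ((T s f - (s - t) • c) - (T t f - (t - t) • c)) := by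
      have h0 : (t - t) • c = 0 := by rw [sub_self, zero_smul]
      rw [h0, sub_zero, smul_sub, smul_sub, smul_sub, smul_smul, inv_mul_cancel₀ hne, one_smul]
      abel
    rw [heq, norm_smul, Real.norm_eq_abs, abs_inv]
    calc |s - t|⁻¹ * ‖(T s f - (s - t) • c) - (T t f - (t - t) • c)‖
        ≤ |s - t|⁻¹ * ((C * |s - t|) * ‖s - t‖) := by
          exact mul_le_mul_of_nonneg_left step2 (by positivity)
      _ = C * |s - t| := by
          rw [Real.norm_eq_abs,
            show |s - t|⁻¹ * (C * |s - t| * |s - t|) = C * (|s - t|⁻¹ * |s - t|) * |s - t| from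
              by ring,
            inv_mul_cancel₀ (ne_of_gt hst), mul_one]
  refine lt_of_le_of_lt key ?_
  calc C * |s - t| ≤ C * (ε / (C + 1)) := mul_le_mul_of_nonneg_left hstε.le hC0
    _ = (C / (C + 1)) * ε := by ring
    _ < 1 * ε := by
        have h1 : C / (C + 1) < 1 := by
          rw [div_lt_one (by positivity)]; linarith
        exact mul_lt_mul_of_pos_right h1 hε
    _ = ε := one_mul ε
end
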